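/- arXiv:1707.02355 — 5 statements merged into one kernel-verified Lean document; each statement's English description precedes it below -/
import Mathlib

section
/- The function z ↦ ∫_ℝ (2πℏ)^{-1/2} exp(-(z-x)²/(2ℏ)) ψ(x) dx is holomorphic on ℂ for every ψ ∈ L²(ℝ). -/
open MeasureTheory Complex Real

/-- The integrand of the Segal--Bargmann transform on `ℝ`: the analytically continued
heat kernel `ρ_ℏ(z - x) = (2πℏ)^{-1/2} e^{-(z-x)²/(2ℏ)}` times `ψ(x)`. -/
noncomputable def sbKernel (ℏ : ℝ) (ψ : ℝ → ℂ) (z : ℂ) (x : ℝ) : ℂ :=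
  ((Real.sqrt (2 * π * ℏ) : ℝ) : ℂ)⁻¹
    * Complex.exp (-(z - (x : ℂ)) ^ 2 / (2 * (ℏ : ℂ))) * ψ x

/-- The Segal--Bargmann transform `(C_ℏ ψ)(z) = ∫ ρ_ℏ(z-x) ψ(x) dx` on `ℝ`. -/
noncomputable def sbTransform (ℏ : ℝ) (ψ : ℝ → ℂ) (z : ℂ) : ℂ :=
  ∫ x : ℝ, sbKernel ℏ ψ z x

lemma sb_gauss_memL2 (b : ℝ) (hb : 0 < b) (c : ℝ) :
    MemLp (fun x : ℝ => (|x - c| + 1) * Real.exp (-b * (x - c) ^ 2)) 2 volume := by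
  have hcont : Continuous fun x : ℝ => (|x - c| + 1) * Real.exp (-b * (x - c) ^ 2) := by
    fun_prop
  rw [memLp_two_iff_integrable_sq hcont.aestronglyMeasurable]
  have h2b : (0 : ℝ) < 2 * b := by linarith
  have h1 : Integrable (fun u : ℝ => u ^ 2 * Real.exp (-(2 * b) * u ^ 2)) := by
    have h := integrable_rpow_mul_exp_neg_mul_sq h2b (s := 2) (by norm_num)
    refine h.congr (Filter.Eventually.of_forall fun u => ?_)
    show u ^ (2 : ℝ) * Real.exp (-(2 * b) * u ^ 2) = u ^ 2 * Real.exp (-(2 * b) * u ^ 2)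
    rw [show ((2 : ℝ)) = ((2 : ℕ) : ℝ) by norm_num, Real.rpow_natCast]
  have h2 : Integrable (fun u : ℝ => |u| * Real.exp (-(2 * b) * u ^ 2)) := by
    have h := (integrable_mul_exp_neg_mul_sq h2b).abs
    refine h.congr (Filter.Eventually.of_forall fun u => ?_)
    show |u * Real.exp (-(2 * b) * u ^ 2)| = |u| * Real.exp (-(2 * b) * u ^ 2)
    rw [abs_mul, _root_.abs_of_nonneg (Real.exp_nonneg _)]
  have h3 : Integrable fun u : ℝ => Real.exp (-(2 * b) * u ^ 2) :=
    integrable_exp_neg_mul_sq h2b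
  have hsum := (h1.add (h2.const_mul 2)).add h3
  have hkey : Integrable (fun u : ℝ => ((|u| + 1) * Real.exp (-b * u ^ 2)) ^ 2) := by
    refine hsum.congr (Filter.Eventually.of_forall fun u => ?_)
    have he : Real.exp (-b * u ^ 2) ^ 2 = Real.exp (-(2 * b) * u ^ 2) := by
      rw [← Real.exp_nat_mul]; ring_nf
    have ha : |u| ^ 2 = u ^ 2 := sq_abs u
    calc u ^ 2 * Real.exp (-(2 * b) * u ^ 2) + 2 * (|u| * Real.exp (-(2 * b) * u ^ 2))
          + Real.exp (-(2 * b) * u ^ 2)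
        = (|u| ^ 2 + 2 * |u| + 1) * Real.exp (-(2 * b) * u ^ 2) := by rw [ha]; ring
      _ = ((|u| + 1) * Real.exp (-b * u ^ 2)) ^ 2 := by rw [← he]; ring
  exact hkey.comp_sub_right c

lemma sb_key_integrable (b : ℝ) (hb : 0 < b) (c : ℝ) {ψ : ℝ → ℂ}
    (hψ : MemLp ψ 2 volume) :
    Integrable (fun x : ℝ => (|x - c| + 1) * Real.exp (-b * (x - c) ^ 2) * ‖ψ x‖) volume := by
  have hφ := sb_gauss_memL2 b hb c
  have h := (hψ.norm).smul hφ (r := 1)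
  rw [memLp_one_iff_integrable] at h
  refine h.congr (Filter.Eventually.of_forall fun x => ?_)
  simp [smul_eq_mul]

lemma sb_norm_exp (ℏ : ℝ) (hℏ : 0 < ℏ) (z : ℂ) (x : ℝ) :
    ‖Complex.exp (-(z - (x : ℂ)) ^ 2 / (2 * (ℏ : ℂ)))‖
      = Real.exp ((z.im ^ 2 - (z.re - x) ^ 2) / (2 * ℏ)) := by
  rw [Complex.norm_exp]
  congr 1
  have h2 : (2 : ℂ) * (ℏ : ℂ) = ((2 * ℏ : ℝ) : ℂ) := by push_cast; ring
  rw [h2, Complex.div_ofReal_re]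
  congr 1
  simp only [pow_two, Complex.neg_re, Complex.mul_re, Complex.sub_re, Complex.sub_im,
    Complex.ofReal_re, Complex.ofReal_im]
  ring

/-- for every `ψ ∈ L²(ℝ)`, the integral defining `(C_ℏψ)(z)` converges
absolutely for every `z`, and `C_ℏψ` is holomorphic on all of `ℂ`. -/
theorem segal_bargmann_transform_holomorphic
    (ℏ : ℝ) (hℏ : 0 < ℏ) (ψ : ℝ → ℂ) (hψ : MemLp ψ 2 volume) :
    (∀ z : ℂ, Integrable (fun x : ℝ => sbKernel ℏ ψ z x)) ∧
    Differentiable ℂ (sbTransform ℏ ψ) := by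
  have hr : (0 : ℝ) < Real.sqrt (2 * π * ℏ) :=
    Real.sqrt_pos.2 (by positivity)
  have hmeas : ∀ z : ℂ, AEStronglyMeasurable (fun x : ℝ => sbKernel ℏ ψ z x) volume := by
    intro z
    refine AEStronglyMeasurable.mul ?_ hψ.1
    exact Continuous.aestronglyMeasurable (by fun_prop)
  have hint : ∀ z : ℂ, Integrable (fun x : ℝ => sbKernel ℏ ψ z x) := by
    intro z
    refine Integrable.mono'
      ((sb_key_integrable (1 / (2 * ℏ)) (by positivity) z.re hψ).const_mul
        ((Real.sqrt (2 * π * ℏ))⁻¹ * Real.exp (z.im ^ 2 / (2 * ℏ))))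
      (hmeas z) (Filter.Eventually.of_forall fun x => ?_)
    have hn : ‖sbKernel ℏ ψ z x‖ = (Real.sqrt (2 * π * ℏ))⁻¹
        * Real.exp ((z.im ^ 2 - (z.re - x) ^ 2) / (2 * ℏ)) * ‖ψ x‖ := by
      unfold sbKernel
      rw [norm_mul, norm_mul, sb_norm_exp ℏ hℏ]
      congr 2
      rw [norm_inv, Complex.norm_real, Real.norm_eq_abs, abs_of_pos hr]
    rw [hn]
    have hexp : Real.exp ((z.im ^ 2 - (z.re - x) ^ 2) / (2 * ℏ))
        = Real.exp (z.im ^ 2 / (2 * ℏ)) * Real.exp (-(1 / (2 * ℏ)) * (x - z.re) ^ 2) := by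
      rw [← Real.exp_add]
      congr 1
      field_simp
      ring
    rw [hexp]
    calc (Real.sqrt (2 * π * ℏ))⁻¹
          * (Real.exp (z.im ^ 2 / (2 * ℏ)) * Real.exp (-(1 / (2 * ℏ)) * (x - z.re) ^ 2)) * ‖ψ x‖
        = (Real.sqrt (2 * π * ℏ))⁻¹ * Real.exp (z.im ^ 2 / (2 * ℏ))
            * (1 * Real.exp (-(1 / (2 * ℏ)) * (x - z.re) ^ 2) * ‖ψ x‖) := by ring
      _ ≤ (Real.sqrt (2 * π * ℏ))⁻¹ * Real.exp (z.im ^ 2 / (2 * ℏ))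
            * ((|x - z.re| + 1) * Real.exp (-(1 / (2 * ℏ)) * (x - z.re) ^ 2) * ‖ψ x‖) := by
          gcongr
          linarith [abs_nonneg (x - z.re)]
  refine ⟨hint, fun z₀ => ?_⟩
  set F' : ℂ → ℝ → ℂ := fun z x =>
    ((Real.sqrt (2 * π * ℏ) : ℝ) : ℂ)⁻¹
      * (Complex.exp (-(z - (x : ℂ)) ^ 2 / (2 * (ℏ : ℂ)))
          * (-(2 * (z - (x : ℂ))) / (2 * (ℏ : ℂ)))) * ψ x with hF'
  have hderiv : ∀ (x : ℝ) (z : ℂ), HasDerivAt (fun z => sbKernel ℏ ψ z x) (F' z x) z := by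
    intro x z
    have h1 : HasDerivAt (fun z : ℂ => -(z - (x : ℂ)) ^ 2 / (2 * (ℏ : ℂ)))
        (-(2 * (z - (x : ℂ))) / (2 * (ℏ : ℂ))) z := by
      have := (((hasDerivAt_id z).sub_const ((x : ℝ) : ℂ)).pow 2).neg.div_const (2 * (ℏ : ℂ))
      simpa using this
    have h2 := h1.cexp
    exact (h2.const_mul (((Real.sqrt (2 * π * ℏ) : ℝ) : ℂ)⁻¹)).mul_const (ψ x)
  set M : ℝ := |z₀.im| + 2 with hM
  set K : ℝ := ((|z₀.im| + 1) ^ 2 + 1) / (2 * ℏ) with hK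
  set C : ℝ := (Real.sqrt (2 * π * ℏ))⁻¹ * Real.exp K * M / ℏ with hC
  set bound : ℝ → ℝ := fun x =>
    C * ((|x - z₀.re| + 1) * Real.exp (-(1 / (4 * ℏ)) * (x - z₀.re) ^ 2) * ‖ψ x‖) with hbd
  have hbound_int : Integrable bound :=
    (sb_key_integrable (1 / (4 * ℏ)) (by positivity) z₀.re hψ).const_mul C
  have hF'meas : AEStronglyMeasurable (F' z₀) volume := by
    refine AEStronglyMeasurable.mul ?_ hψ.1
    refine Continuous.aestronglyMeasurable ?_
    fun_prop
  have h_bd : ∀ᵐ x : ℝ ∂volume, ∀ z ∈ Metric.ball z₀ 1, ‖F' z x‖ ≤ bound x := by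
    refine Filter.Eventually.of_forall fun x => fun z hz => ?_
    have hz1 : ‖z - z₀‖ < 1 := by
      simpa [Complex.dist_eq] using hz
    have him : |z.im - z₀.im| ≤ 1 := by
      have h := Complex.abs_im_le_norm (z - z₀)
      simp only [Complex.sub_im] at h
      linarith
    have hre : |z.re - z₀.re| ≤ 1 := by
      have h := Complex.abs_re_le_norm (z - z₀)
      simp only [Complex.sub_re] at h
      linarith
    have hnF' : ‖F' z x‖ = (Real.sqrt (2 * π * ℏ))⁻¹
        * (Real.exp ((z.im ^ 2 - (z.re - x) ^ 2) / (2 * ℏ))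
            * (‖z - (x : ℂ)‖ / ℏ)) * ‖ψ x‖ := by
      rw [hF']
      simp only [norm_mul]
      rw [sb_norm_exp ℏ hℏ]
      congr 2
      · rw [norm_inv, Complex.norm_real, Real.norm_eq_abs, abs_of_pos hr]
      · rw [norm_div, norm_neg, norm_mul, norm_mul]
        simp only [Complex.norm_two, Complex.norm_real, Real.norm_eq_abs]
        rw [abs_of_pos hℏ]
        field_simp
    have hexp : Real.exp ((z.im ^ 2 - (z.re - x) ^ 2) / (2 * ℏ))
        ≤ Real.exp K * Real.exp (-(1 / (4 * ℏ)) * (x - z₀.re) ^ 2) := by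
      rw [← Real.exp_add]
      apply Real.exp_le_exp.2
      have h1 : z.im ^ 2 ≤ (|z₀.im| + 1) ^ 2 := by
        have h2 : |z.im| ≤ |z₀.im| + 1 := by
          have := abs_sub_abs_le_abs_sub z.im z₀.im
          linarith
        nlinarith [abs_nonneg z.im, _root_.sq_abs z.im]
      have h2 : (x - z₀.re) ^ 2 / 2 - 1 ≤ (z.re - x) ^ 2 := by
        have hre2 : (z.re - z₀.re) ^ 2 ≤ 1 := by
          nlinarith [_root_.sq_abs (z.re - z₀.re), abs_nonneg (z.re - z₀.re)]
        nlinarith [sq_nonneg (2 * (z.re - x) + (x - z₀.re))]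
      have e : K + (-(1 / (4 * ℏ)) * (x - z₀.re) ^ 2)
          = ((|z₀.im| + 1) ^ 2 + 1 - (x - z₀.re) ^ 2 / 2) / (2 * ℏ) := by
        rw [hK]; field_simp; ring
      rw [e]
      gcongr ?_ / _
      linarith
    have habs : ‖z - (x : ℂ)‖ ≤ |x - z₀.re| + (|z₀.im| + 1) := by
      have h1 : ‖z - (x : ℂ)‖ ≤ ‖z - z₀‖ + ‖z₀ - (x : ℂ)‖ := by
        have e : z - (x : ℂ) = (z - z₀) + (z₀ - (x : ℂ)) := by ring
        rw [e]
        exact norm_add_le _ _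
      have h2 : ‖z₀ - (x : ℂ)‖ ≤ |z₀.re - x| + |z₀.im| := by
        have h := Complex.norm_le_abs_re_add_abs_im (z₀ - (x : ℂ))
        simpa using h
      rw [abs_sub_comm x z₀.re]
      linarith
    have hM1 : (1 : ℝ) ≤ M := by rw [hM]; linarith [abs_nonneg z₀.im]
    calc ‖F' z x‖
        = (Real.sqrt (2 * π * ℏ))⁻¹
            * (Real.exp ((z.im ^ 2 - (z.re - x) ^ 2) / (2 * ℏ))
                * (‖z - (x : ℂ)‖ / ℏ)) * ‖ψ x‖ := hnF'
      _ ≤ (Real.sqrt (2 * π * ℏ))⁻¹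
            * ((Real.exp K * Real.exp (-(1 / (4 * ℏ)) * (x - z₀.re) ^ 2))
                * ((|x - z₀.re| + (|z₀.im| + 1)) / ℏ)) * ‖ψ x‖ := by
          gcongr
      _ ≤ (Real.sqrt (2 * π * ℏ))⁻¹
            * ((Real.exp K * Real.exp (-(1 / (4 * ℏ)) * (x - z₀.re) ^ 2))
                * ((M * (|x - z₀.re| + 1)) / ℏ)) * ‖ψ x‖ := by
          gcongr
          nlinarith [abs_nonneg (x - z₀.re)]
      _ = bound x := by rw [hbd, hC, hM]; ring
  have hres := hasDerivAt_integral_of_dominated_loc_of_deriv_le (μ := volume)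
    (F := fun z x => sbKernel ℏ ψ z x) (F' := F') (x₀ := z₀) (bound := bound)
    (Metric.ball_mem_nhds z₀ one_pos) (Filter.Eventually.of_forall hmeas) (hint z₀) hF'meas h_bd hbound_int
    (Filter.Eventually.of_forall fun x => fun z _ => hderiv x z)
  exact hres.2.differentiableAt
end

section
/- With Δ_N the bi-invariant Laplacian on U(N) for the inner product ⟨X,Y⟩_N = N·Trace(X*Y), for every positive integer k: Δ_N(U^k) = -k U^k - 2 Σ_{m=1}^{k-1} m U^m tr(U^{k-m}), where tr denotes the normalized trace tr(A) = (1/N)Trace(A), and Δ_N acts entrywise on the matrix-valued function U ↦ U^k. -/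
open Matrix MeasureTheory
open scoped BigOperators

/-- The normalized trace `tr(A) = (1/N) Trace(A)`. -/
noncomputable def ntr {N : ℕ} (A : Matrix (Fin N) (Fin N) ℂ) : ℂ :=
  (N : ℂ)⁻¹ * Matrix.trace A

/-- `X` is skew-Hermitian, i.e. an element of the Lie algebra `u(N)`. -/
def IsSkewHerm {N : ℕ} (X : Matrix (Fin N) (Fin N) ℂ) : Prop := Xᴴ = -X

/-- `X : ι → u(N)` is an orthonormal basis of the real vector space `u(N)` of
skew-Hermitian matrices with respect to the inner product `⟨X,Y⟩_N = N·Re Trace(XᴴY)`: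
each `X i` is skew-Hermitian, the family is orthonormal, and every skew-Hermitian
matrix is the sum of its components along the `X i`. -/
def IsONB {N : ℕ} {ι : Type} [Fintype ι] [DecidableEq ι] (X : ι → Matrix (Fin N) (Fin N) ℂ) : Prop :=
  (∀ i, IsSkewHerm (X i)) ∧
  (∀ i j, (N : ℝ) * (Matrix.trace ((X i)ᴴ * X j)).re = if i = j then 1 else 0) ∧
  (∀ A : Matrix (Fin N) (Fin N) ℂ, IsSkewHerm A →
    A = ∑ i, ((N : ℝ) * (Matrix.trace ((X i)ᴴ * A)).re) • X i)

/-- The bi-invariant Laplacian `Δ_N = Σ_i ∂_{X_i}²` on scalar functions, where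
`(∂_X f)(U) = d/ds|₀ f(U e^{sX})`, for the orthonormal basis `X` of `u(N)`. -/
noncomputable def lap {N : ℕ} {ι : Type} [Fintype ι] (X : ι → Matrix (Fin N) (Fin N) ℂ)
    (f : Matrix (Fin N) (Fin N) ℂ → ℂ) (U : Matrix (Fin N) (Fin N) ℂ) : ℂ :=
  ∑ i, iteratedDeriv 2 (fun s : ℝ => f (U * NormedSpace.exp (s • X i))) 0

/-- The Laplacian `Δ_N` acting entrywise on matrix-valued functions. -/
noncomputable def mlap {N : ℕ} {ι : Type} [Fintype ι] (X : ι → Matrix (Fin N) (Fin N) ℂ)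
    (f : Matrix (Fin N) (Fin N) ℂ → Matrix (Fin N) (Fin N) ℂ)
    (U : Matrix (Fin N) (Fin N) ℂ) : Matrix (Fin N) (Fin N) ℂ :=
  Matrix.of fun j k => lap X (fun V => f V j k) U

section Aux

open Finset

/-! ### Derivative lemmas -/

private lemma deriv_pow_aux {R : Type*} [NormedRing R] [NormedAlgebra ℝ R] {g : ℝ → R} {Y : R}
    (hg : ∀ s, HasDerivAt g (g s * Y) s) (n : ℕ) (s : ℝ) :
    HasDerivAt (fun t => g t ^ n) (∑ m ∈ Finset.range n, g s ^ (m+1) * Y * g s ^ (n-1-m)) s := by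
  induction n with
  | zero => simpa using hasDerivAt_const s (1:R)
  | succ n ih =>
      have h := ih.fun_mul (hg s)
      have hfun : (fun t => g t ^ n * g t) = fun t => g t ^ (n+1) := by
        funext t; rw [← pow_succ]
      rw [hfun] at h
      convert h using 1
      rw [Finset.sum_range_succ, Finset.sum_mul]
      have h1 : ∀ m ∈ Finset.range n,
          g s ^ (m+1) * Y * g s ^ (n+1-1-m) = g s ^ (m+1) * Y * g s ^ (n-1-m) * g s := by
        intro m hm
        rw [mul_assoc (g s ^ (m+1) * Y), ← pow_succ]
        congr 2
        simp only [Finset.mem_range] at hm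
        omega
      rw [Finset.sum_congr rfl h1]
      congr 1
      have : n + 1 - 1 - n = 0 := by omega
      rw [this, pow_zero, mul_one, ← mul_assoc, ← pow_succ]

private lemma deriv_D1_aux {R : Type*} [NormedRing R] [NormedAlgebra ℝ R] {g : ℝ → R} {Y : R}
    (hg : ∀ s, HasDerivAt g (g s * Y) s) (k : ℕ) (s : ℝ) :
    HasDerivAt (fun t => ∑ m ∈ Finset.range k, g t ^ (m+1) * Y * g t ^ (k-1-m))
      (∑ m ∈ Finset.range k,
        ((∑ a ∈ Finset.range (m+1), g s ^ (a+1) * Y * g s ^ (m-a)) * Y * g s ^ (k-1-m)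
          + g s ^ (m+1) * Y * (∑ b ∈ Finset.range (k-1-m), g s ^ (b+1) * Y * g s ^ (k-1-m-1-b)))) s := by
  apply HasDerivAt.fun_sum
  intro m hm
  have h := ((deriv_pow_aux hg (m+1) s).mul_const Y).fun_mul (deriv_pow_aux hg (k-1-m) s)
  convert h using 2
  · rfl
  · simp

private lemma entry_second {N : ℕ} (U Y : Matrix (Fin N) (Fin N) ℂ) (k : ℕ) (j l : Fin N) :
    iteratedDeriv 2 (fun s : ℝ => ((U * NormedSpace.exp (s • Y)) ^ k) j l) 0
      = (∑ m ∈ Finset.range k,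
          ((∑ a ∈ Finset.range (m+1), U^(a+1) * Y * U^(m-a)) * Y * U^(k-1-m)
            + U^(m+1) * Y * (∑ b ∈ Finset.range (k-1-m), U^(b+1) * Y * U^(k-1-m-1-b)))) j l := by
  letI : SeminormedRing (Matrix (Fin N) (Fin N) ℂ) := Matrix.linftyOpSemiNormedRing
  letI : NormedRing (Matrix (Fin N) (Fin N) ℂ) := Matrix.linftyOpNormedRing
  letI : NormedAlgebra ℝ (Matrix (Fin N) (Fin N) ℂ) := Matrix.linftyOpNormedAlgebra
  suffices h : iteratedDeriv 2 (fun s : ℝ => ((U * NormedSpace.exp (s • Y)) ^ k) j l) 0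
      = (∑ m ∈ Finset.range k,
          ((∑ a ∈ Finset.range (m+1), U^(a+1) * Y * U^(m-a)) * Y * U^(k-1-m)
            + U^(m+1) * Y * (∑ b ∈ Finset.range (k-1-m), U^(b+1) * Y * U^(k-1-m-1-b)))) j l by
    exact h
  have h0 : (NormedSpace.exp : Matrix (Fin N) (Fin N) ℂ → _) = NormedSpace.exp :=
    rfl
  have hg : ∀ s : ℝ, HasDerivAt (fun t : ℝ => U * NormedSpace.exp (t • Y))
      ((U * NormedSpace.exp (s • Y)) * Y) s := by
    intro s
    have h : HasDerivAt (fun u : ℝ => NormedSpace.exp (u • Y)) (NormedSpace.exp (s • Y) * Y) s := by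
      rw [← h0]; exact hasDerivAt_exp_smul_const Y s
    convert h.const_mul U using 1
    · rfl
    · rfl
    · rfl
    · simp [mul_assoc]
  let π : Matrix (Fin N) (Fin N) ℂ →L[ℝ] ℂ := LinearMap.toContinuousLinearMap
    { toFun := fun A => A j l
      map_add' := fun A B => rfl
      map_smul' := fun c A => rfl }
  have hentry : ∀ (F : ℝ → Matrix (Fin N) (Fin N) ℂ) (F' : Matrix (Fin N) (Fin N) ℂ) (s : ℝ),
      HasDerivAt F F' s → HasDerivAt (fun t => F t j l) (F' j l) s := by
    intro F F' s h
    exact (π.hasFDerivAt).comp_hasDerivAt s h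
  rw [iteratedDeriv_succ, iteratedDeriv_one]
  have hder1 : (deriv fun s : ℝ => ((U * NormedSpace.exp (s • Y)) ^ k) j l)
      = fun s : ℝ => (∑ m ∈ Finset.range k, (U * NormedSpace.exp (s • Y)) ^ (m+1) * Y
          * (U * NormedSpace.exp (s • Y)) ^ (k-1-m)) j l :=
    funext fun s => (hentry _ _ s (deriv_pow_aux hg k s)).deriv
  rw [hder1]
  have hder2 : deriv (fun s : ℝ => (∑ m ∈ Finset.range k, (U * NormedSpace.exp (s • Y)) ^ (m+1) * Y
          * (U * NormedSpace.exp (s • Y)) ^ (k-1-m)) j l) 0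
      = (∑ m ∈ Finset.range k,
          ((∑ a ∈ Finset.range (m+1), (U * NormedSpace.exp ((0:ℝ) • Y)) ^ (a+1) * Y
              * (U * NormedSpace.exp ((0:ℝ) • Y)) ^ (m-a)) * Y
              * (U * NormedSpace.exp ((0:ℝ) • Y)) ^ (k-1-m)
            + (U * NormedSpace.exp ((0:ℝ) • Y)) ^ (m+1) * Y
              * (∑ b ∈ Finset.range (k-1-m), (U * NormedSpace.exp ((0:ℝ) • Y)) ^ (b+1) * Y
                * (U * NormedSpace.exp ((0:ℝ) • Y)) ^ (k-1-m-1-b)))) j l :=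
    (hentry _ _ 0 (deriv_D1_aux hg k 0)).deriv
  rw [hder2]
  have hU0 : U * NormedSpace.exp ((0:ℝ) • Y) = U := by
    rw [zero_smul, NormedSpace.exp_zero, mul_one]
  rw [hU0]

/-! ### Orthonormal basis identities -/

variable {N : ℕ} {ι : Type} [Fintype ι] [DecidableEq ι] {X : ι → Matrix (Fin N) (Fin N) ℂ}

private lemma trace_mul_std (C : Matrix (Fin N) (Fin N) ℂ) (p q : Fin N) :
    Matrix.trace (C * Matrix.single q p 1) = C p q := by
  simp [Matrix.trace, Matrix.diag, Matrix.mul_apply, Matrix.single, Matrix.of_apply,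
    ite_and, Finset.sum_ite_eq]

private lemma sum_smul_of_skew (hX : IsONB X) {A : Matrix (Fin N) (Fin N) ℂ} (hA : IsSkewHerm A) :
    ∑ i, ((N : ℂ) * Matrix.trace (X i * A)) • X i = -A := by
  obtain ⟨hskew, -, hcompl⟩ := hX
  have hreal : ∀ i, (starRingEnd ℂ) (Matrix.trace (X i * A)) = Matrix.trace (X i * A) := by
    intro i
    calc (starRingEnd ℂ) (Matrix.trace (X i * A))
        = star (Matrix.trace (X i * A)) := rfl
      _ = Matrix.trace ((X i * A)ᴴ) := (Matrix.trace_conjTranspose _).symm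
      _ = Matrix.trace (Aᴴ * (X i)ᴴ) := by rw [Matrix.conjTranspose_mul]
      _ = Matrix.trace ((-A) * (-(X i))) := by rw [hA, hskew i]
      _ = Matrix.trace (A * X i) := by rw [Matrix.neg_mul, Matrix.mul_neg, neg_neg]
      _ = Matrix.trace (X i * A) := Matrix.trace_mul_comm _ _
  conv_rhs => rw [hcompl A hA]
  rw [← Finset.sum_neg_distrib]
  refine Finset.sum_congr rfl fun i _ => ?_
  rw [← neg_smul]
  have h1 : Matrix.trace ((X i)ᴴ * A) = -Matrix.trace (X i * A) := by
    rw [hskew i, Matrix.neg_mul, Matrix.trace_neg]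
  have h2 : ((Matrix.trace (X i * A)).re : ℂ) = Matrix.trace (X i * A) :=
    Complex.conj_eq_iff_re.mp (hreal i)
  rw [← Complex.coe_smul]
  congr 1
  rw [h1]
  push_cast [Complex.neg_re]
  rw [h2]
  ring

private lemma sum_smul_general (hX : IsONB X) (B : Matrix (Fin N) (Fin N) ℂ) :
    ∑ i, ((N : ℂ) * Matrix.trace (X i * B)) • X i = -B := by
  set A1 : Matrix (Fin N) (Fin N) ℂ := (2:ℂ)⁻¹ • (B - Bᴴ) with hA1
  set A2 : Matrix (Fin N) (Fin N) ℂ := (-(Complex.I)/2) • (B + Bᴴ) with hA2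
  have hA1s : IsSkewHerm A1 := by
    unfold IsSkewHerm
    rw [hA1, Matrix.conjTranspose_smul, Matrix.conjTranspose_sub, Matrix.conjTranspose_conjTranspose]
    have hc : (star ((2:ℂ)⁻¹)) = (2:ℂ)⁻¹ := by simp
    rw [hc]
    module
  have hA2s : IsSkewHerm A2 := by
    unfold IsSkewHerm
    rw [hA2, Matrix.conjTranspose_smul, Matrix.conjTranspose_add, Matrix.conjTranspose_conjTranspose]
    have hc : (star (-Complex.I/2)) = Complex.I/2 := by
      simp [Complex.ext_iff]
    rw [hc]
    module
  have hdecomp : B = A1 + Complex.I • A2 := by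
    rw [hA1, hA2, smul_smul]
    have : Complex.I * (-Complex.I/2) = (2:ℂ)⁻¹ := by
      simp [Complex.ext_iff]
      norm_num
    rw [this]
    module
  have h1 := sum_smul_of_skew hX hA1s
  have h2 := sum_smul_of_skew hX hA2s
  calc ∑ i, ((N : ℂ) * Matrix.trace (X i * B)) • X i
      = ∑ i, (((N : ℂ) * Matrix.trace (X i * A1)) • X i
          + Complex.I • (((N : ℂ) * Matrix.trace (X i * A2)) • X i)) := by
        refine Finset.sum_congr rfl fun i _ => ?_
        rw [smul_smul, ← add_smul]
        congr 1
        conv_lhs => rw [hdecomp]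
        simp only [Matrix.mul_add, Matrix.trace_add, Matrix.mul_smul, Matrix.trace_smul,
          smul_eq_mul]
        ring
    _ = -B := by
        rw [Finset.sum_add_distrib, h1, ← Finset.smul_sum, h2]
        conv_rhs => rw [hdecomp]
        module

private lemma key_identity (hN : 0 < N) (hX : IsONB X) (B : Matrix (Fin N) (Fin N) ℂ) :
    ∑ i, X i * B * X i = (-(ntr B)) • (1 : Matrix (Fin N) (Fin N) ℂ) := by
  have hNc : (N : ℂ) ≠ 0 := Nat.cast_ne_zero.2 hN.ne'
  have tensor : ∀ p q c d : Fin N, ∑ i, X i p q * X i c d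
      = -(N:ℂ)⁻¹ * (Matrix.single q p (1:ℂ)) c d := by
    intro p q c d
    have h := congrFun (congrFun (sum_smul_general hX (Matrix.single q p 1)) c) d
    simp only [Matrix.sum_apply, Matrix.smul_apply, Matrix.neg_apply, smul_eq_mul,
      trace_mul_std] at h
    calc ∑ i, X i p q * X i c d
        = (N:ℂ)⁻¹ * ∑ i, (N:ℂ) * X i p q * X i c d := by
          rw [Finset.mul_sum]
          refine Finset.sum_congr rfl fun i _ => ?_
          field_simp
      _ = (N:ℂ)⁻¹ * -(Matrix.single q p (1:ℂ)) c d := by rw [h]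
      _ = -(N:ℂ)⁻¹ * (Matrix.single q p (1:ℂ)) c d := by ring
  ext a d
  simp only [Matrix.sum_apply, Matrix.mul_apply, Matrix.smul_apply, Matrix.one_apply,
    smul_eq_mul]
  calc ∑ i, ∑ c, (∑ b, X i a b * B b c) * X i c d
      = ∑ c, ∑ b, B b c * ∑ i, X i a b * X i c d := by
        rw [Finset.sum_comm]
        refine Finset.sum_congr rfl fun c _ => ?_
        simp_rw [Finset.sum_mul]
        rw [Finset.sum_comm]
        refine Finset.sum_congr rfl fun b _ => ?_
        rw [Finset.mul_sum]
        refine Finset.sum_congr rfl fun i _ => ?_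
        ring
    _ = ∑ c, ∑ b, B b c * (-(N:ℂ)⁻¹ * (Matrix.single b a (1:ℂ)) c d) := by
        refine Finset.sum_congr rfl fun c _ => Finset.sum_congr rfl fun b _ => ?_
        rw [tensor a b c d]
    _ = -ntr B * (if a = d then 1 else 0) := by
        unfold ntr
        by_cases had : a = d
        · subst had
          simp only [Matrix.single, Matrix.of_apply, if_pos rfl, ite_and]
          simp [Matrix.trace, Matrix.diag, Finset.mul_sum, mul_ite, Finset.sum_ite_eq]
          refine Finset.sum_congr rfl fun c _ => ?_
          ring
        · simp only [Matrix.single, Matrix.of_apply, ite_and, if_neg had]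
          simp [had]

/-! ### Counting lemmas -/

private lemma tri_aux {α : Type*} [AddCommMonoid α] (f : ℕ → α) (k : ℕ) :
    ∑ m ∈ Finset.range k, ∑ b ∈ Finset.range m, f b
      = ∑ b ∈ Finset.range k, (k - 1 - b) • f b := by
  induction k with
  | zero => simp
  | succ k ih =>
    rw [Finset.sum_range_succ, ih,
      Finset.sum_range_succ (f := fun b => (k + 1 - 1 - b) • f b)]
    have h0 : (k + 1 - 1 - k) • f k = 0 • f k := by norm_num
    rw [h0, zero_smul, add_zero, ← Finset.sum_add_distrib]
    refine Finset.sum_congr rfl fun b hb => ?_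
    simp only [Finset.mem_range] at hb
    have h1 : k + 1 - 1 - b = (k - 1 - b) + 1 := by omega
    rw [h1, succ_nsmul]

private lemma tri_aux' {α : Type*} [AddCommMonoid α] (f : ℕ → α) (k : ℕ) :
    ∑ m ∈ Finset.range k, ∑ a ∈ Finset.range (m+1), f a
      = ∑ a ∈ Finset.range k, (k - a) • f a := by
  have h := tri_aux f (k+1)
  rw [Finset.sum_range_succ' (f := fun m => ∑ b ∈ Finset.range m, f b)] at h
  simp only [Finset.range_zero, Finset.sum_empty, add_zero] at h
  rw [h, Finset.sum_range_succ]
  have h0 : (k + 1 - 1 - k) • f k = 0 • f k := by norm_num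
  rw [h0, zero_smul, add_zero]
  refine Finset.sum_congr rfl fun a ha => ?_
  simp only [Finset.mem_range] at ha
  congr 1

end Aux

/-- `Δ_N(U^k) = -k U^k - 2 Σ_{m=1}^{k-1} m U^m tr(U^(k-m))`. -/
theorem laplacian_of_power
    (N : ℕ) (hN : 0 < N) (ι : Type) [Fintype ι] [DecidableEq ι]
    (X : ι → Matrix (Fin N) (Fin N) ℂ) (hX : IsONB X)
    (k : ℕ) (hk : 0 < k) (U : Matrix (Fin N) (Fin N) ℂ)
    (hU : U ∈ Matrix.unitaryGroup (Fin N) ℂ) :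
    mlap X (fun V => V ^ k) U
      = (-(k : ℂ)) • U ^ k
        - (2 : ℂ) • ∑ m ∈ Finset.Ico 1 k, (m : ℂ) • (ntr (U ^ (k - m)) • U ^ m) := by
  classical
  have hNc : (N : ℂ) ≠ 0 := Nat.cast_ne_zero.2 hN.ne'
  set C : ℕ → Matrix (Fin N) (Fin N) ℂ := fun d => (-(ntr (U^d))) • U^(k-d) with hC
  -- Step 1 : reduce to matrix algebra
  have h1 : mlap X (fun V => V ^ k) U
      = ∑ i, ∑ m ∈ Finset.range k,
          ((∑ a ∈ Finset.range (m+1), U^(a+1) * X i * U^(m-a)) * X i * U^(k-1-m)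
            + U^(m+1) * X i * (∑ b ∈ Finset.range (k-1-m), U^(b+1) * X i * U^(k-1-m-1-b))) := by
    ext j l
    simp only [mlap, lap, Matrix.of_apply, Matrix.sum_apply]
    refine Finset.sum_congr rfl fun i _ => ?_
    exact (entry_second U (X i) k j l).trans (Matrix.sum_apply _ _ _ _)
  rw [h1]
  -- Step 2 : apply the key identity
  have h2 : (∑ i, ∑ m ∈ Finset.range k,
          ((∑ a ∈ Finset.range (m+1), U^(a+1) * X i * U^(m-a)) * X i * U^(k-1-m)
            + U^(m+1) * X i * (∑ b ∈ Finset.range (k-1-m), U^(b+1) * X i * U^(k-1-m-1-b))))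
      = ∑ m ∈ Finset.range k,
          ((∑ a ∈ Finset.range (m+1), C (m-a)) + ∑ b ∈ Finset.range (k-1-m), C (b+1)) := by
    rw [Finset.sum_comm]
    refine Finset.sum_congr rfl fun m hm => ?_
    simp only [Finset.mem_range] at hm
    rw [Finset.sum_add_distrib]
    congr 1
    · calc ∑ i, (∑ a ∈ Finset.range (m+1), U^(a+1) * X i * U^(m-a)) * X i * U^(k-1-m)
          = ∑ a ∈ Finset.range (m+1), U^(a+1) * (∑ i, X i * U^(m-a) * X i) * U^(k-1-m) := by
            simp only [Finset.sum_mul, Finset.mul_sum]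
            rw [Finset.sum_comm]
            refine Finset.sum_congr rfl fun a _ => Finset.sum_congr rfl fun i _ => ?_
            simp only [mul_assoc]
        _ = ∑ a ∈ Finset.range (m+1), C (m-a) := by
            refine Finset.sum_congr rfl fun a ha => ?_
            simp only [Finset.mem_range] at ha
            rw [key_identity hN hX (U^(m-a))]
            rw [mul_smul_comm, mul_one, smul_mul_assoc, ← pow_add]
            rw [hC]
            have : a + 1 + (k-1-m) = k - (m-a) := by omega
            rw [this]
    · calc ∑ i, U^(m+1) * X i * (∑ b ∈ Finset.range (k-1-m), U^(b+1) * X i * U^(k-1-m-1-b))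
          = ∑ b ∈ Finset.range (k-1-m), U^(m+1) * (∑ i, X i * U^(b+1) * X i) * U^(k-1-m-1-b) := by
            simp only [Finset.mul_sum, Finset.sum_mul]
            rw [Finset.sum_comm]
            refine Finset.sum_congr rfl fun b _ => Finset.sum_congr rfl fun i _ => ?_
            simp only [mul_assoc]
        _ = ∑ b ∈ Finset.range (k-1-m), C (b+1) := by
            refine Finset.sum_congr rfl fun b hb => ?_
            simp only [Finset.mem_range] at hb
            rw [key_identity hN hX (U^(b+1))]
            rw [mul_smul_comm, mul_one, smul_mul_assoc, ← pow_add]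
            rw [hC]
            have : m + 1 + (k-1-m-1-b) = k - (b+1) := by omega
            rw [this]
  rw [h2]
  -- Step 3 : reflect and count
  have h3 : ∑ m ∈ Finset.range k,
        ((∑ a ∈ Finset.range (m+1), C (m-a)) + ∑ b ∈ Finset.range (k-1-m), C (b+1))
      = ∑ a ∈ Finset.range k, (k-a) • C a + ∑ b ∈ Finset.range k, (k-1-b) • C (b+1) := by
    rw [Finset.sum_add_distrib]
    congr 1
    · rw [← tri_aux' C k]
      refine Finset.sum_congr rfl fun m _ => ?_
      exact Finset.sum_range_reflect C (m+1)
    · rw [← tri_aux (fun b => C (b+1)) k]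
      exact Finset.sum_range_reflect (fun m => ∑ b ∈ Finset.range m, C (b+1)) k
  rw [h3]
  -- Step 4 : convert to Ico sums
  have e1 : ∑ a ∈ Finset.range k, (k-a) • C a
      = k • C 0 + ∑ a ∈ Finset.Ico 1 k, (k-a) • C a := by
    rw [Finset.range_eq_Ico, Finset.sum_eq_sum_Ico_succ_bot hk]
    norm_num
  have e2 : ∑ b ∈ Finset.range k, (k-1-b) • C (b+1)
      = ∑ a ∈ Finset.Ico 1 k, (k-a) • C a := by
    calc ∑ b ∈ Finset.range k, (k-1-b) • C (b+1)
        = ∑ a ∈ Finset.Ico 1 (k+1), (k-a) • C a := by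
          rw [Finset.sum_Ico_eq_sum_range]
          refine Finset.sum_congr (by norm_num) fun b hb => ?_
          rw [add_comm 1 b]
          congr 1
          omega
      _ = ∑ a ∈ Finset.Ico 1 k, (k-a) • C a := by
          rw [Finset.sum_Ico_succ_top (by omega : 1 ≤ k)]
          simp
  rw [e1, e2]
  -- Step 5 : the a = 0 term
  have hntr1 : ntr (1 : Matrix (Fin N) (Fin N) ℂ) = 1 := by
    unfold ntr
    rw [Matrix.trace_one]
    simp [Fintype.card_fin]
    field_simp
  have e3 : k • C 0 = (-(k:ℂ)) • U^k := by
    rw [hC]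
    simp only [pow_zero, Nat.sub_zero, hntr1]
    rw [← Nat.cast_smul_eq_nsmul ℂ k, smul_smul]
    congr 1
    ring
  rw [e3]
  -- Step 6 : identify the Ico sums with the RHS sum
  have e4 : ∑ a ∈ Finset.Ico 1 k, (k-a) • C a
      = -∑ m ∈ Finset.Ico 1 k, (m:ℂ) • (ntr (U ^ (k - m)) • U ^ m) := by
    rw [← Finset.sum_neg_distrib]
    refine Finset.sum_nbij' (i := fun a => k - a) (j := fun m => k - m) ?_ ?_ ?_ ?_ ?_
    · intro a ha
      simp only [Finset.mem_Ico] at ha ⊢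
      omega
    · intro a ha
      simp only [Finset.mem_Ico] at ha ⊢
      omega
    · intro a ha
      simp only [Finset.mem_Ico] at ha
      show k - (k - a) = a
      omega
    · intro a ha
      simp only [Finset.mem_Ico] at ha
      show k - (k - a) = a
      omega
    · intro a ha
      simp only [Finset.mem_Ico] at ha
      rw [hC]
      have hkka : k - (k - a) = a := by omega
      rw [hkka]
      rw [← Nat.cast_smul_eq_nsmul ℂ (k-a), smul_smul, ← neg_smul, smul_smul]
      congr 1
      ring
  rw [e4]
  rw [two_smul ℂ]
  abel
end

section
/- With Δ_N as above, for every positive integer k: Δ_N(tr(U^k)) = -k·tr(U^k) - 2 Σ_{m=1}^{k-1} m·tr(U^m)·tr(U^{k-m}), where tr is the normalized trace. -/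
open Matrix MeasureTheory
open scoped BigOperators

/-! ### Auxiliary lemmas -/

section Aux

attribute [local instance] Matrix.linftyOpNormedRing Matrix.linftyOpNormedAlgebra

/-- Derivative of the `k`-th power of a curve satisfying `C' = C·X`. -/
lemma aux_hasDerivAt_pow_comp {A : Type*} [NormedRing A] [NormedAlgebra ℝ A]
    {C : ℝ → A} {X : A} (hC : ∀ s, HasDerivAt C (C s * X) s) (k : ℕ) (s : ℝ) :
    HasDerivAt (fun s => C s ^ k)
      (∑ p ∈ Finset.range k, C s ^ (p + 1) * X * C s ^ (k - 1 - p)) s := by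
  induction k with
  | zero => simpa using hasDerivAt_const s (1 : A)
  | succ k ih =>
      have h := ih.mul (hC s)
      have : ((fun s => C s ^ k) * C) = fun s => C s ^ (k + 1) := by
        funext u; exact (pow_succ (C u) k).symm
      rw [this] at h
      convert h using 1
      rw [Finset.sum_range_succ, Finset.sum_mul]
      have h1 : ∀ p ∈ Finset.range k,
          C s ^ (p + 1) * X * C s ^ (k + 1 - 1 - p)
            = C s ^ (p + 1) * X * C s ^ (k - 1 - p) * C s := by
        intro p hp
        rw [Finset.mem_range] at hp
        rw [show k + 1 - 1 - p = (k - 1 - p) + 1 from by omega, pow_succ (C s) (k - 1 - p),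
          ← mul_assoc]
      rw [Finset.sum_congr rfl h1]
      have h2 : C s ^ (k + 1) * X * C s ^ (k + 1 - 1 - k) = C s ^ k * (C s * X) := by
        simp [pow_succ, mul_assoc]
      rw [h2]

/-- The trace as a continuous `ℝ`-linear map. -/
noncomputable def auxTrCLM (N : ℕ) : Matrix (Fin N) (Fin N) ℂ →L[ℝ] ℂ :=
  LinearMap.toContinuousLinearMap ((Matrix.traceLinearMap (Fin N) ℂ ℂ).restrictScalars ℝ)

lemma auxTrCLM_apply {N : ℕ} (A : Matrix (Fin N) (Fin N) ℂ) :
    auxTrCLM N A = Matrix.trace A := rfl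

/-- The second derivative at `0` of `s ↦ tr((U·e^{sX})^k)`. -/
lemma aux_second_deriv_ntr_pow {N : ℕ} (k : ℕ) (U X : Matrix (Fin N) (Fin N) ℂ) :
    iteratedDeriv 2 (fun s : ℝ => ntr ((U * NormedSpace.exp (s • X)) ^ k)) 0
      = (N : ℂ)⁻¹ * k * ∑ p ∈ Finset.range k,
          Matrix.trace (U ^ (p + 1) * X * (U ^ (k - 1 - p) * X)) := by
  set C : ℝ → Matrix (Fin N) (Fin N) ℂ := fun s => U * NormedSpace.exp (s • X) with hCdef
  have hC : ∀ s, HasDerivAt C (C s * X) s := by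
    intro s
    rw [hCdef]
    have h := (hasDerivAt_exp_smul_const (𝕂 := ℝ) X s).const_mul U
    rw [← mul_assoc] at h
    exact h
  have hC0 : C 0 = U := by simp [hCdef]
  have htr : ∀ p, p ∈ Finset.range k → ∀ s : ℝ,
      Matrix.trace (C s ^ (p + 1) * X * C s ^ (k - 1 - p)) = Matrix.trace (C s ^ k * X) := by
    intro p hp s
    rw [Finset.mem_range] at hp
    rw [Matrix.trace_mul_comm, ← mul_assoc, ← pow_add]
    congr 3
    omega
  have hφ : ∀ s : ℝ, HasDerivAt (fun s => ntr (C s ^ k))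
      ((N : ℂ)⁻¹ * ((k : ℂ) * Matrix.trace (C s ^ k * X))) s := by
    intro s
    have h1 := ((auxTrCLM N).hasFDerivAt.comp_hasDerivAt s (aux_hasDerivAt_pow_comp hC k s))
    have h2 : auxTrCLM N (∑ p ∈ Finset.range k, C s ^ (p + 1) * X * C s ^ (k - 1 - p))
        = (k : ℂ) * Matrix.trace (C s ^ k * X) := by
      rw [auxTrCLM_apply, Matrix.trace_sum, Finset.sum_congr rfl (fun p hp => htr p hp s)]
      simp [mul_comm]
    replace h1 : HasDerivAt (⇑(auxTrCLM N) ∘ fun s => C s ^ k)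
        ((k : ℂ) * Matrix.trace (C s ^ k * X)) s := by
      rw [← h2]; exact h1
    exact h1.const_mul ((N : ℂ)⁻¹)
  have hψ : HasDerivAt (fun s : ℝ => Matrix.trace (C s ^ k * X))
      (Matrix.trace ((∑ p ∈ Finset.range k, C 0 ^ (p + 1) * X * C 0 ^ (k - 1 - p)) * X)) 0 := by
    have h1 := ((aux_hasDerivAt_pow_comp hC k 0).mul_const X)
    exact ((auxTrCLM N).hasFDerivAt.comp_hasDerivAt 0 h1)
  rw [iteratedDeriv_succ, iteratedDeriv_one]
  have hder : deriv (fun s : ℝ => ntr ((U * NormedSpace.exp (s • X)) ^ k))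
      = fun s => (N : ℂ)⁻¹ * (k : ℂ) * Matrix.trace (C s ^ k * X) := by
    funext s
    have := (hφ s).deriv
    simpa [ntr, mul_assoc] using this
  rw [hder]
  have := (hψ.const_mul ((N : ℂ)⁻¹ * (k : ℂ))).deriv
  rw [this, hC0]
  congr 1
  rw [Finset.sum_mul, Matrix.trace_sum]
  exact Finset.sum_congr rfl fun p _ => by rw [mul_assoc]

variable {N : ℕ} {ι : Type} [Fintype ι] [DecidableEq ι]
  {X : ι → Matrix (Fin N) (Fin N) ℂ}

lemma aux_trace_real (hX : IsONB X) (i : ι) {S : Matrix (Fin N) (Fin N) ℂ}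
    (hS : IsSkewHerm S) :
    ((Matrix.trace ((X i)ᴴ * S)).re : ℂ) = Matrix.trace ((X i)ᴴ * S) := by
  have h1 : (starRingEnd ℂ) (Matrix.trace ((X i)ᴴ * S)) = Matrix.trace ((X i)ᴴ * S) := by
    have h2 : (starRingEnd ℂ) (Matrix.trace ((X i)ᴴ * S))
        = Matrix.trace (((X i)ᴴ * S)ᴴ) := by
      rw [Matrix.trace_conjTranspose]; rfl
    rw [h2, Matrix.conjTranspose_mul, Matrix.conjTranspose_conjTranspose, hS, hX.1 i,
      Matrix.neg_mul, Matrix.neg_mul, Matrix.trace_neg, Matrix.trace_neg,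
      Matrix.trace_mul_comm]
  exact Complex.conj_eq_iff_re.mp h1

lemma aux_complete_skew (hX : IsONB X) {S : Matrix (Fin N) (Fin N) ℂ} (hS : IsSkewHerm S) :
    ∑ i, ((N : ℂ) * Matrix.trace ((X i)ᴴ * S)) • X i = S := by
  conv_rhs => rw [hX.2.2 S hS]
  refine Finset.sum_congr rfl fun i _ => ?_
  rw [← aux_trace_real hX i hS]
  ext a b
  simp [Matrix.smul_apply, Complex.real_smul]

lemma aux_complete (hX : IsONB X) (M : Matrix (Fin N) (Fin N) ℂ) :
    ∑ i, ((N : ℂ) * Matrix.trace ((X i)ᴴ * M)) • X i = M := by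
  obtain ⟨A, hA⟩ : ∃ A, A = (2 : ℂ)⁻¹ • (M - Mᴴ) := ⟨_, rfl⟩
  obtain ⟨B, hB⟩ : ∃ B, B = (-(Complex.I * 2⁻¹)) • (M + Mᴴ) := ⟨_, rfl⟩
  have hAs : IsSkewHerm A := by
    rw [IsSkewHerm, hA, Matrix.conjTranspose_smul, Matrix.conjTranspose_sub,
      Matrix.conjTranspose_conjTranspose]
    have h2 : (star (2⁻¹ : ℂ)) = 2⁻¹ := by simp
    rw [h2, ← smul_neg, neg_sub]
  have hBs : IsSkewHerm B := by
    rw [IsSkewHerm, hB, Matrix.conjTranspose_smul, Matrix.conjTranspose_add,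
      Matrix.conjTranspose_conjTranspose]
    have hc : star (-(Complex.I * 2⁻¹)) = Complex.I * 2⁻¹ := by
      simp [Complex.ext_iff]
    rw [hc, add_comm Mᴴ M, ← neg_smul, neg_neg]
  have hM : M = A + Complex.I • B := by
    rw [hA, hB, smul_smul]
    have : Complex.I * -(Complex.I * 2⁻¹) = 2⁻¹ := by
      rw [mul_neg, ← mul_assoc, Complex.I_mul_I]; ring
    rw [this]
    ext a b
    simp [Matrix.smul_apply, Matrix.add_apply, Matrix.sub_apply]
    ring
  have ht : ∀ i, Matrix.trace ((X i)ᴴ * M)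
      = Matrix.trace ((X i)ᴴ * A) + Complex.I * Matrix.trace ((X i)ᴴ * B) := by
    intro i
    conv_lhs => rw [hM]
    rw [Matrix.mul_add, Matrix.trace_add, Matrix.mul_smul, Matrix.trace_smul, smul_eq_mul]
  calc ∑ i, ((N : ℂ) * Matrix.trace ((X i)ᴴ * M)) • X i
      = ∑ i, (((N : ℂ) * Matrix.trace ((X i)ᴴ * A)) • X i
          + Complex.I • (((N : ℂ) * Matrix.trace ((X i)ᴴ * B)) • X i)) := by
        refine Finset.sum_congr rfl fun i _ => ?_
        rw [ht i, mul_add, add_smul, smul_smul]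
        congr 2
        ring
    _ = A + Complex.I • B := by
        rw [Finset.sum_add_distrib, ← Finset.smul_sum, aux_complete_skew hX hAs,
          aux_complete_skew hX hBs]
    _ = M := hM.symm

lemma aux_pair_sum (hN : 0 < N)
    (hc : ∀ M : Matrix (Fin N) (Fin N) ℂ,
      ∑ i, ((N : ℂ) * Matrix.trace ((X i)ᴴ * M)) • X i = M)
    (hsk : ∀ i, (X i)ᴴ = -(X i))
    (a b c d : Fin N) :
    ∑ i, X i a b * X i c d
      = -(N : ℂ)⁻¹ * ((if b = c then 1 else 0) * (if a = d then 1 else 0)) := by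
  have hNC : (N : ℂ) ≠ 0 := Nat.cast_ne_zero.mpr hN.ne'
  have h := hc (Matrix.single b a 1)
  have htr : ∀ i, Matrix.trace ((X i)ᴴ * Matrix.single b a 1) = -(X i a b) := by
    intro i
    rw [hsk i, Matrix.neg_mul, Matrix.trace_neg]
    congr 1
    rw [Matrix.trace_mul_comm]
    simp [Matrix.trace, Matrix.diag, Matrix.mul_apply, Matrix.single, mul_ite, ite_and,
      Finset.sum_ite_eq, Finset.sum_ite_eq']
  simp only [htr] at h
  have h2 := congrFun (congrFun h c) d
  simp only [Matrix.sum_apply, Matrix.smul_apply, smul_eq_mul] at h2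
  have h3 : ∑ i, X i a b * X i c d
      = -(N : ℂ)⁻¹ * ∑ i, ((N : ℂ) * -(X i a b)) * X i c d := by
    rw [Finset.mul_sum]
    refine Finset.sum_congr rfl fun i _ => ?_
    field_simp
  rw [h3, h2]
  have h4 : (Matrix.single b a 1 : Matrix (Fin N) (Fin N) ℂ) c d
      = (if b = c then 1 else 0) * (if a = d then 1 else 0) := by
    simp only [Matrix.single, Matrix.of_apply, ite_and]
    split_ifs <;> simp
  rw [h4]

lemma aux_sumXBX (hN : 0 < N)
    (hc : ∀ M : Matrix (Fin N) (Fin N) ℂ,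
      ∑ i, ((N : ℂ) * Matrix.trace ((X i)ᴴ * M)) • X i = M)
    (hsk : ∀ i, (X i)ᴴ = -(X i))
    (B : Matrix (Fin N) (Fin N) ℂ) :
    ∑ i, X i * B * X i = (-(N : ℂ)⁻¹ * Matrix.trace B) • (1 : Matrix (Fin N) (Fin N) ℂ) := by
  ext a d
  rw [Matrix.sum_apply]
  calc ∑ i, (X i * B * X i) a d
      = ∑ i, ∑ c, ∑ b, B b c * (X i a b * X i c d) := by
        refine Finset.sum_congr rfl fun i _ => ?_
        simp only [Matrix.mul_apply, Finset.sum_mul]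
        exact Finset.sum_congr rfl fun c _ => Finset.sum_congr rfl fun b _ => by ring
    _ = ∑ c, ∑ b, B b c * ∑ i, X i a b * X i c d := by
        rw [Finset.sum_comm]
        refine Finset.sum_congr rfl fun c _ => ?_
        rw [Finset.sum_comm]
        exact Finset.sum_congr rfl fun b _ => (Finset.mul_sum _ _ _).symm
    _ = ∑ c, ∑ b, B b c * (-(N : ℂ)⁻¹ * ((if b = c then 1 else 0) * (if a = d then 1 else 0))) :=
        Finset.sum_congr rfl fun c _ => Finset.sum_congr rfl fun b _ => by
          rw [aux_pair_sum hN hc hsk]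
    _ = ((-(N : ℂ)⁻¹ * Matrix.trace B) • (1 : Matrix (Fin N) (Fin N) ℂ)) a d := by
        simp only [ite_mul, one_mul, zero_mul, mul_ite, mul_zero, Finset.sum_ite_eq',
          Finset.mem_univ, if_true]
        simp only [Matrix.smul_apply, Matrix.one_apply, Matrix.trace, Matrix.diag, smul_eq_mul,
          mul_ite, mul_one, mul_zero, Finset.sum_ite_eq, Finset.sum_mul]
        split_ifs
        · simp only [Finset.sum_ite_eq', Finset.mem_univ, if_true, Finset.mul_sum]
          exact Finset.sum_congr rfl fun c _ => by ring
        · simp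

lemma aux_key_trace (hN : 0 < N)
    (hc : ∀ M : Matrix (Fin N) (Fin N) ℂ,
      ∑ i, ((N : ℂ) * Matrix.trace ((X i)ᴴ * M)) • X i = M)
    (hsk : ∀ i, (X i)ᴴ = -(X i))
    (A B : Matrix (Fin N) (Fin N) ℂ) :
    ∑ i, Matrix.trace (A * X i * (B * X i))
      = -(N : ℂ)⁻¹ * (Matrix.trace A * Matrix.trace B) := by
  have h1 : ∀ i : ι, Matrix.trace (A * X i * (B * X i))
      = Matrix.trace (A * (X i * B * X i)) := by
    intro i; simp only [mul_assoc]
  simp only [h1]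
  rw [← Matrix.trace_sum, ← Matrix.mul_sum, aux_sumXBX hN hc hsk, Matrix.mul_smul,
    Matrix.trace_smul, smul_eq_mul, Matrix.mul_one]
  ring

end Aux

/-- `Δ_N(tr(U^k)) = -k tr(U^k) - 2 Σ_{m=1}^{k-1} m tr(U^m) tr(U^(k-m))`. -/
theorem laplacian_of_trace_power
    (N : ℕ) (hN : 0 < N) (ι : Type) [Fintype ι] [DecidableEq ι]
    (X : ι → Matrix (Fin N) (Fin N) ℂ) (hX : IsONB X)
    (k : ℕ) (hk : 0 < k) (U : Matrix (Fin N) (Fin N) ℂ)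
    (hU : U ∈ Matrix.unitaryGroup (Fin N) ℂ) :
    lap X (fun V => ntr (V ^ k)) U
      = -(k : ℂ) * ntr (U ^ k)
        - 2 * ∑ m ∈ Finset.Ico 1 k, (m : ℂ) * (ntr (U ^ m) * ntr (U ^ (k - m))) := by
  have hNC : (N : ℂ) ≠ 0 := Nat.cast_ne_zero.mpr hN.ne'
  have hsk : ∀ i, (X i)ᴴ = -(X i) := fun i => hX.1 i
  have hc := aux_complete hX
  have step1 : lap X (fun V => ntr (V ^ k)) U
      = ∑ i, ((N : ℂ)⁻¹ * k * ∑ p ∈ Finset.range k,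
          Matrix.trace (U ^ (p + 1) * X i * (U ^ (k - 1 - p) * X i))) := by
    refine Finset.sum_congr rfl fun i _ => ?_
    exact aux_second_deriv_ntr_pow k U (X i)
  rw [step1, ← Finset.mul_sum, Finset.sum_comm]
  have step2 : ∀ p ∈ Finset.range k,
      ∑ i, Matrix.trace (U ^ (p + 1) * X i * (U ^ (k - 1 - p) * X i))
        = -(N : ℂ)⁻¹ * (Matrix.trace (U ^ (p + 1)) * Matrix.trace (U ^ (k - 1 - p))) :=
    fun p _ => aux_key_trace hN hc hsk _ _
  rw [Finset.sum_congr rfl step2]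
  -- now pure scalar arithmetic
  have hstep3 : ∀ p ∈ Finset.range k,
      -(N : ℂ)⁻¹ * (Matrix.trace (U ^ (p + 1)) * Matrix.trace (U ^ (k - 1 - p)))
        = -(N : ℂ) * (ntr (U ^ (p + 1)) * ntr (U ^ (k - (p + 1)))) := by
    intro p hp
    rw [show k - 1 - p = k - (p + 1) from by omega, ntr, ntr]
    field_simp
  rw [Finset.sum_congr rfl hstep3, Finset.mul_sum]
  have hsimp : ∀ p ∈ Finset.range k,
      (N : ℂ)⁻¹ * (k : ℂ) * (-(N : ℂ) * (ntr (U ^ (p + 1)) * ntr (U ^ (k - (p + 1)))))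
        = -(k : ℂ) * (ntr (U ^ (p + 1)) * ntr (U ^ (k - (p + 1)))) := by
    intro p _
    field_simp
  rw [Finset.sum_congr rfl hsimp, ← Finset.mul_sum]

  -- reindex `p + 1 = m`
  have hre : ∑ p ∈ Finset.range k, ntr (U ^ (p + 1)) * ntr (U ^ (k - (p + 1)))
      = ∑ m ∈ Finset.Ico 1 (k + 1), ntr (U ^ m) * ntr (U ^ (k - m)) := by
    rw [Finset.sum_Ico_eq_sum_range]
    simp only [Nat.add_sub_cancel]
    exact Finset.sum_congr rfl fun p _ => by rw [add_comm 1 p]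
  rw [hre, Finset.sum_Ico_succ_top (by omega : 1 ≤ k)]
  have htk : ntr (U ^ k) * ntr (U ^ (k - k)) = ntr (U ^ k) := by
    have h1 : ntr (U ^ (k - k)) = 1 := by
      rw [Nat.sub_self, pow_zero, ntr, Matrix.trace_one]
      simp [inv_mul_cancel₀ hNC]
    rw [h1, mul_one]
  rw [htk]
  -- symmetry of the summand under `m ↦ k - m`
  have hsym : ∑ m ∈ Finset.Ico 1 k, (m : ℂ) * (ntr (U ^ m) * ntr (U ^ (k - m)))
      = ∑ m ∈ Finset.Ico 1 k, ((k : ℂ) - m) * (ntr (U ^ m) * ntr (U ^ (k - m))) := by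
    refine Finset.sum_nbij' (fun m => k - m) (fun m => k - m) ?_ ?_ ?_ ?_ ?_
    · intro m hm; simp only [Finset.mem_Ico] at hm ⊢; omega
    · intro m hm; simp only [Finset.mem_Ico] at hm ⊢; omega
    · intro m hm; rw [Finset.mem_Ico] at hm; show k - (k - m) = m; omega
    · intro m hm; rw [Finset.mem_Ico] at hm; show k - (k - m) = m; omega
    · intro m hm
      rw [Finset.mem_Ico] at hm
      beta_reduce
      rw [show k - (k - m) = m from by omega, Nat.cast_sub (by omega : m ≤ k)]
      ring
  have hE : (2 : ℂ) * ∑ m ∈ Finset.Ico 1 k, (m : ℂ) * (ntr (U ^ m) * ntr (U ^ (k - m)))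
      = (k : ℂ) * ∑ m ∈ Finset.Ico 1 k, ntr (U ^ m) * ntr (U ^ (k - m)) := by
    rw [two_mul]
    nth_rewrite 1 [hsym]
    rw [← Finset.sum_add_distrib, Finset.mul_sum]
    exact Finset.sum_congr rfl fun m _ => by ring
  linear_combination hE
end

section
/- Let Δ_N be the bi-invariant Laplacian on U(N) with the scaled metric. For positive integers k, l, the cross term in the product rule satisfies: Δ_N(U^k · tr(U^l)) = Δ_N(U^k)·tr(U^l) + U^k·Δ_N(tr(U^l)) - (2kl/N²)·U^{k+l}. -/
open Matrix MeasureTheory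
open scoped BigOperators

section Magic
variable {N : ℕ} {ι : Type} [Fintype ι] [DecidableEq ι]

lemma trace_skew_real {A B : Matrix (Fin N) (Fin N) ℂ}
    (hA : IsSkewHerm A) (hB : IsSkewHerm B) :
    ((Matrix.trace (A * B)).re : ℂ) = Matrix.trace (A * B) := by
  have h : (starRingEnd ℂ) (Matrix.trace (A * B)) = Matrix.trace (A * B) := by
    calc (starRingEnd ℂ) (Matrix.trace (A * B)) = Matrix.trace ((A * B)ᴴ) := by
          rw [Matrix.trace_conjTranspose, starRingEnd_apply]
      _ = Matrix.trace (Bᴴ * Aᴴ) := by rw [Matrix.conjTranspose_mul]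
      _ = Matrix.trace (A * B) := by
          rw [hA, hB, Matrix.neg_mul, Matrix.mul_neg, neg_neg, Matrix.trace_mul_comm]
  exact Complex.conj_eq_iff_re.mp h

lemma magic_skew (hN : 0 < N) {X : ι → Matrix (Fin N) (Fin N) ℂ} (hX : IsONB X)
    {A : Matrix (Fin N) (Fin N) ℂ} (hA : IsSkewHerm A) :
    ∑ i, Matrix.trace (X i * A) • X i = (-(N:ℂ)⁻¹) • A := by
  have hNne : (N:ℂ) ≠ 0 := Nat.cast_ne_zero.mpr hN.ne'
  have h := hX.2.2 A hA
  have key : ∀ i, (((N:ℝ) * (Matrix.trace ((X i)ᴴ * A)).re) • X i : Matrix (Fin N) (Fin N) ℂ)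
      = (-(N:ℂ)) • (Matrix.trace (X i * A) • X i) := by
    intro i
    have h1 : (X i)ᴴ * A = -(X i * A) := by rw [hX.1 i, Matrix.neg_mul]
    have h2 : ((Matrix.trace (X i * A)).re : ℂ) = Matrix.trace (X i * A) :=
      trace_skew_real (hX.1 i) hA
    rw [← algebraMap_smul (R := ℝ) ℂ ((N:ℝ) * (Matrix.trace ((X i)ᴴ * A)).re) (X i), smul_smul,
      h1, Matrix.trace_neg]
    congr 1
    rw [Complex.coe_algebraMap, Complex.neg_re, Complex.ofReal_mul, Complex.ofReal_neg, h2]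
    push_cast
    ring
  rw [Finset.sum_congr rfl (fun i _ => key i), ← Finset.smul_sum] at h
  have h3 := congrArg (fun (M : Matrix (Fin N) (Fin N) ℂ) => (-(N:ℂ)⁻¹) • M) h
  simp only [smul_smul] at h3
  rw [h3, neg_mul_neg, inv_mul_cancel₀ hNne, one_smul]

lemma magic (hN : 0 < N) {X : ι → Matrix (Fin N) (Fin N) ℂ} (hX : IsONB X)
    (M₀ : Matrix (Fin N) (Fin N) ℂ) :
    ∑ i, Matrix.trace (X i * M₀) • X i = (-(N:ℂ)⁻¹) • M₀ := by
  set A := ((2:ℂ)⁻¹) • (M₀ - M₀ᴴ) with hAdef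
  set B := (-(Complex.I)/2) • (M₀ + M₀ᴴ) with hBdef
  have s1 : star ((2:ℂ)⁻¹) = (2:ℂ)⁻¹ := by norm_num
  have s2 : star (-(Complex.I)/2) = -(-(Complex.I)/2) := by
    simp [star_div₀, Complex.star_def, Complex.conj_I]
    ring
  have hA : IsSkewHerm A := by
    rw [IsSkewHerm, hAdef, Matrix.conjTranspose_smul, Matrix.conjTranspose_sub,
      Matrix.conjTranspose_conjTranspose, s1, ← smul_neg, neg_sub]
  have hB : IsSkewHerm B := by
    rw [IsSkewHerm, hBdef, Matrix.conjTranspose_smul, Matrix.conjTranspose_add,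
      Matrix.conjTranspose_conjTranspose, s2, neg_smul, add_comm]
  have hM : M₀ = A + Complex.I • B := by
    rw [hAdef, hBdef, smul_smul]
    have hI : Complex.I * (-(Complex.I)/2) = (2:ℂ)⁻¹ := by
      field_simp
      simp
    rw [hI]
    module
  have expand : ∀ i, Matrix.trace (X i * M₀) • X i
      = Matrix.trace (X i * A) • X i + Complex.I • (Matrix.trace (X i * B) • X i) := by
    intro i
    conv_lhs => rw [hM]
    rw [Matrix.mul_add, Matrix.trace_add, add_smul]
    simp only [Matrix.mul_smul, Matrix.trace_smul, smul_eq_mul, mul_smul]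
  rw [Finset.sum_congr rfl (fun i _ => expand i), Finset.sum_add_distrib, ← Finset.smul_sum,
    magic_skew hN hX hA, magic_skew hN hX hB]
  conv_rhs => rw [hM]
  rw [smul_add]
  congr 1
  rw [smul_comm]

end Magic


section Calc2

private lemma iteratedDeriv_two_eq {p P : ℝ → ℂ} (hp : ∀ s, HasDerivAt p (P s) s) :
    iteratedDeriv 2 p 0 = deriv P 0 := by
  have hdp : deriv p = P := funext fun s => (hp s).deriv
  rw [iteratedDeriv_succ, iteratedDeriv_one, hdp]

private lemma iteratedDeriv_two_mul {p q P Q : ℝ → ℂ}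
    (hp : ∀ s, HasDerivAt p (P s) s) (hq : ∀ s, HasDerivAt q (Q s) s)
    (hP : DifferentiableAt ℝ P 0) (hQ : DifferentiableAt ℝ Q 0) :
    iteratedDeriv 2 (fun s => q s * p s) 0
      = deriv Q 0 * p 0 + 2 * (Q 0 * P 0) + q 0 * deriv P 0 := by
  have heq : iteratedDeriv 2 (fun s => q s * p s) 0
      = deriv (fun s => Q s * p s + q s * P s) 0 := by
    rw [iteratedDeriv_succ, iteratedDeriv_one]
    congr 1
    funext s
    exact (((hq s).mul (hp s)).deriv)
  rw [heq]
  have h1 : HasDerivAt (fun s => Q s * p s + q s * P s)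
      (deriv Q 0 * p 0 + Q 0 * P 0 + (Q 0 * P 0 + q 0 * deriv P 0)) 0 :=
    (hQ.hasDerivAt.mul (hp 0)).add ((hq 0).mul hP.hasDerivAt)
  rw [h1.deriv]
  ring

end Calc2

open NormedSpace in
private lemma key_bundle {N : ℕ} (U X : Matrix (Fin N) (Fin N) ℂ) (m l' : ℕ) (j r : Fin N) :
    iteratedDeriv 2 (fun s : ℝ => (N:ℂ)⁻¹ * Matrix.trace ((U * exp (s • X)) ^ l')
        * ((U * exp (s • X)) ^ m) j r) 0
      = iteratedDeriv 2 (fun s : ℝ => (N:ℂ)⁻¹ * Matrix.trace ((U * exp (s • X)) ^ l')) 0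
          * (U ^ m) j r
        + 2 * ((N:ℂ)⁻¹ * (l' : ℂ) * Matrix.trace (U ^ l' * X)
            * ∑ a ∈ Finset.range m, (U ^ (a+1) * X * U ^ (m - 1 - a)) j r)
        + (N:ℂ)⁻¹ * Matrix.trace (U ^ l')
          * iteratedDeriv 2 (fun s : ℝ => ((U * exp (s • X)) ^ m) j r) 0 := by
  letI : SeminormedRing (Matrix (Fin N) (Fin N) ℂ) := Matrix.linftyOpSemiNormedRing
  letI : NormedRing (Matrix (Fin N) (Fin N) ℂ) := Matrix.linftyOpNormedRing
  letI : NormedAlgebra ℝ (Matrix (Fin N) (Fin N) ℂ) := Matrix.linftyOpNormedAlgebra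
  -- derivative of the base function
  have hA : ∀ s : ℝ, HasDerivAt (fun t : ℝ => U * exp (t • X))
      (U * exp (s • X) * X) s := by
    intro s
    have h : HasDerivAt (fun t : ℝ => exp (t • X)) (exp (s • X) * X) s := by
      exact hasDerivAt_exp_smul_const X s
    have h2 := HasDerivAt.const_mul U h
    simp only [mul_assoc] at h2 ⊢
    exact h2
  -- derivative of powers
  have hpow : ∀ (n : ℕ) (s : ℝ), HasDerivAt (fun t : ℝ => (U * exp (t • X)) ^ n)
      (∑ a ∈ Finset.range n, (U * exp (s • X)) ^ a * (U * exp (s • X) * X)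
        * (U * exp (s • X)) ^ (n - 1 - a)) s := by
    intro n
    induction n with
    | zero =>
      intro s
      simp only [pow_zero, Finset.range_zero, Finset.sum_empty]
      exact hasDerivAt_const s (1 : Matrix (Fin N) (Fin N) ℂ)
    | succ n ih =>
      intro s
      have h := (ih s).fun_mul (hA s)
      have hfun : (fun t : ℝ => (U * exp (t • X)) ^ n * (U * exp (t • X)))
          = fun t : ℝ => (U * exp (t • X)) ^ (n + 1) := by
        funext t
        rw [← pow_succ]
      rw [hfun] at h
      refine HasDerivAt.congr_deriv h (Eq.symm ?_)
      rw [Finset.sum_range_succ, Finset.sum_mul]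
      congr 1
      · refine Finset.sum_congr rfl fun a ha => ?_
        rw [Finset.mem_range] at ha
        have hre : n + 1 - 1 - a = (n - 1 - a) + 1 := by omega
        rw [hre, pow_succ]
        simp only [mul_assoc]
      · have hz : n + 1 - 1 - n = 0 := by omega
        rw [hz, pow_zero, mul_one]
  -- entrywise extraction
  have hentry : ∀ {F : ℝ → Matrix (Fin N) (Fin N) ℂ} {F' : Matrix (Fin N) (Fin N) ℂ} {s : ℝ},
      HasDerivAt F F' s → ∀ (a b : Fin N), HasDerivAt (fun t => F t a b) (F' a b) s := by
    intro F F' s h a b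
    let L : Matrix (Fin N) (Fin N) ℂ →L[ℝ] ℂ :=
      LinearMap.toContinuousLinearMap
        { toFun := fun M => M a b
          map_add' := fun _ _ => rfl
          map_smul' := fun _ _ => rfl }
    exact L.hasFDerivAt.comp_hasDerivAt s h
  have htr : ∀ {F : ℝ → Matrix (Fin N) (Fin N) ℂ} {F' : Matrix (Fin N) (Fin N) ℂ} {s : ℝ},
      HasDerivAt F F' s → HasDerivAt (fun t => Matrix.trace (F t)) (Matrix.trace F') s := by
    intro F F' s h
    have h2 := HasDerivAt.fun_sum (fun d (_ : d ∈ (Finset.univ : Finset (Fin N))) => hentry h d d)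
    simpa [Matrix.trace, Matrix.diag] using h2
  -- the two scalar functions and their derivative functions
  have hp : ∀ s : ℝ, HasDerivAt (fun t : ℝ => ((U * exp (t • X)) ^ m) j r)
      ((∑ a ∈ Finset.range m, (U * exp (s • X)) ^ a * (U * exp (s • X) * X)
        * (U * exp (s • X)) ^ (m - 1 - a)) j r) s :=
    fun s => hentry (hpow m s) j r
  have hq : ∀ s : ℝ, HasDerivAt (fun t : ℝ => (N:ℂ)⁻¹ * Matrix.trace ((U * exp (t • X)) ^ l'))
      ((N:ℂ)⁻¹ * Matrix.trace (∑ a ∈ Finset.range l', (U * exp (s • X)) ^ a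
        * (U * exp (s • X) * X) * (U * exp (s • X)) ^ (l' - 1 - a))) s :=
    fun s => HasDerivAt.const_mul _ (htr (hpow l' s))
  -- differentiability of the derivative functions at 0
  have hDm : ∀ (n : ℕ), ∃ W, HasDerivAt (fun t : ℝ => ∑ a ∈ Finset.range n,
      (U * exp (t • X)) ^ a * (U * exp (t • X) * X) * (U * exp (t • X)) ^ (n - 1 - a)) W 0 :=
    fun n => ⟨_, HasDerivAt.fun_sum (fun a _ =>
      ((hpow a 0).fun_mul ((hA 0).mul_const X)).fun_mul (hpow (n - 1 - a) 0))⟩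
  obtain ⟨Wm, hWm⟩ := hDm m
  obtain ⟨Wl, hWl⟩ := hDm l'
  have hPd : DifferentiableAt ℝ (fun s : ℝ => (∑ a ∈ Finset.range m, (U * exp (s • X)) ^ a
      * (U * exp (s • X) * X) * (U * exp (s • X)) ^ (m - 1 - a)) j r) 0 :=
    (hentry hWm j r).differentiableAt
  have hQd : DifferentiableAt ℝ (fun s : ℝ => (N:ℂ)⁻¹ * Matrix.trace (∑ a ∈ Finset.range l',
      (U * exp (s • X)) ^ a * (U * exp (s • X) * X) * (U * exp (s • X)) ^ (l' - 1 - a))) 0 :=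
    ((htr hWl).const_mul ((N:ℂ)⁻¹)).differentiableAt
  have big := iteratedDeriv_two_mul hp hq hPd hQd
  have hU0 : U * exp ((0:ℝ) • X) = U := by rw [zero_smul, exp_zero, mul_one]
  have e3 : iteratedDeriv 2 (fun s : ℝ => (N:ℂ)⁻¹ * Matrix.trace ((U * exp (s • X)) ^ l')) 0
      = deriv (fun s : ℝ => (N:ℂ)⁻¹ * Matrix.trace (∑ a ∈ Finset.range l',
        (U * exp (s • X)) ^ a * (U * exp (s • X) * X)
        * (U * exp (s • X)) ^ (l' - 1 - a))) 0 :=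
    iteratedDeriv_two_eq hq
  have e4 : iteratedDeriv 2 (fun s : ℝ => ((U * exp (s • X)) ^ m) j r) 0
      = deriv (fun s : ℝ => (∑ a ∈ Finset.range m, (U * exp (s • X)) ^ a
        * (U * exp (s • X) * X) * (U * exp (s • X)) ^ (m - 1 - a)) j r) 0 :=
    iteratedDeriv_two_eq hp
  have hterm : ∀ (n a : ℕ), U ^ a * (U * X) * U ^ (n - 1 - a)
      = U ^ (a + 1) * X * U ^ (n - 1 - a) := by
    intro n a
    rw [← mul_assoc, ← pow_succ]
  have htr2 : Matrix.trace (∑ a ∈ Finset.range l', U ^ a * (U * X) * U ^ (l' - 1 - a))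
      = (l' : ℂ) * Matrix.trace (U ^ l' * X) := by
    rw [Matrix.trace_sum]
    have hcg : ∀ a ∈ Finset.range l',
        Matrix.trace (U ^ a * (U * X) * U ^ (l' - 1 - a)) = Matrix.trace (U ^ l' * X) := by
      intro a ha
      rw [Finset.mem_range] at ha
      rw [hterm l' a, Matrix.trace_mul_comm, ← mul_assoc, ← pow_add]
      have hee : l' - 1 - a + (a + 1) = l' := by omega
      rw [hee]
    rw [Finset.sum_congr rfl hcg, Finset.sum_const, Finset.card_range, nsmul_eq_mul]
  have hsum : (∑ a ∈ Finset.range m, U ^ a * (U * X) * U ^ (m - 1 - a)) j r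
      = ∑ a ∈ Finset.range m, (U ^ (a + 1) * X * U ^ (m - 1 - a)) j r := by
    rw [Finset.sum_congr rfl (fun a _ => hterm m a)]
    simp [Matrix.sum_apply]
  refine big.trans ?_
  rw [hU0, e3, e4, htr2, hsum]
  ring


/-- the product rule with explicit cross term:
`Δ_N(U^k tr(U^l)) = Δ_N(U^k) tr(U^l) + U^k Δ_N(tr(U^l)) - (2kl/N²) U^(k+l)`. -/
theorem laplacian_product_cross_term
    (N : ℕ) (hN : 0 < N) (ι : Type) [Fintype ι] [DecidableEq ι]
    (X : ι → Matrix (Fin N) (Fin N) ℂ) (hX : IsONB X)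
    (k l : ℕ) (hk : 0 < k) (hl : 0 < l) (U : Matrix (Fin N) (Fin N) ℂ)
    (hU : U ∈ Matrix.unitaryGroup (Fin N) ℂ) :
    mlap X (fun V => ntr (V ^ l) • V ^ k) U
      = ntr (U ^ l) • mlap X (fun V => V ^ k) U
        + lap X (fun V => ntr (V ^ l)) U • U ^ k
        - ((2 * k * l : ℂ) / (N : ℂ) ^ 2) • U ^ (k + l) := by
  have hNne : (N:ℂ) ≠ 0 := Nat.cast_ne_zero.mpr hN.ne'
  ext j r
  simp only [mlap, lap, ntr, Matrix.of_apply, Matrix.sub_apply, Matrix.add_apply,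
    Matrix.smul_apply, smul_eq_mul]
  rw [Finset.sum_congr rfl (fun i _ => key_bundle U (X i) k l j r)]
  have inner : ∀ a : ℕ, a < k →
      (∑ i, Matrix.trace (U ^ l * X i) * ((U ^ (a+1) * X i * U ^ (k-1-a)) j r))
        = -(N:ℂ)⁻¹ * ((U ^ (k+l)) j r) := by
    intro a ha
    have h := magic hN hX (U ^ l)
    have h2 := congrArg
      (fun Y : Matrix (Fin N) (Fin N) ℂ => (U ^ (a+1) * Y * U ^ (k-1-a)) j r) h
    simp only [Matrix.mul_sum, Matrix.sum_mul, Matrix.mul_smul, Matrix.smul_mul,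
      Matrix.mul_neg, Matrix.neg_mul, Matrix.sum_apply, Matrix.smul_apply, smul_eq_mul,
      neg_smul, Matrix.neg_apply] at h2
    have hpw : U ^ (a+1) * U ^ l * U ^ (k-1-a) = U ^ (k+l) := by
      rw [← pow_add, ← pow_add]
      congr 1
      omega
    rw [hpw] at h2
    rw [Finset.sum_congr rfl (fun i _ => by rw [Matrix.trace_mul_comm]), h2]
    ring
  have hcross : ∑ i, 2 * ((N:ℂ)⁻¹ * (l:ℂ) * Matrix.trace (U ^ l * X i)
        * ∑ a ∈ Finset.range k, (U ^ (a+1) * X i * U ^ (k-1-a)) j r)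
      = -(2 * (k:ℂ) * (l:ℂ) / (N:ℂ)^2 * ((U ^ (k+l)) j r)) := by
    have step1 : ∀ i : ι, 2 * ((N:ℂ)⁻¹ * (l:ℂ) * Matrix.trace (U^l * X i)
          * ∑ a ∈ Finset.range k, (U^(a+1) * X i * U^(k-1-a)) j r)
        = ∑ a ∈ Finset.range k, 2 * ((N:ℂ)⁻¹ * (l:ℂ))
            * (Matrix.trace (U^l * X i) * (U^(a+1) * X i * U^(k-1-a)) j r) := by
      intro i
      simp only [Finset.mul_sum]
      exact Finset.sum_congr rfl fun a _ => by ring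
    rw [Finset.sum_congr rfl (fun i _ => step1 i), Finset.sum_comm]
    have step2 : ∀ a ∈ Finset.range k,
        (∑ i, 2 * ((N:ℂ)⁻¹ * (l:ℂ))
          * (Matrix.trace (U^l * X i) * (U^(a+1) * X i * U^(k-1-a)) j r))
        = 2 * ((N:ℂ)⁻¹ * (l:ℂ)) * (-(N:ℂ)⁻¹ * ((U^(k+l)) j r)) := by
      intro a ha
      rw [← Finset.mul_sum, inner a (Finset.mem_range.mp ha)]
    rw [Finset.sum_congr rfl step2, Finset.sum_const, Finset.card_range, nsmul_eq_mul]
    field_simp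
  rw [Finset.sum_add_distrib, Finset.sum_add_distrib, hcross, Finset.sum_mul, Finset.mul_sum]
  ring
end

section
/- For f, g trace polynomial functions on U(N) with g scalar (containing no untraced powers of U), there exists a trace polynomial h, with coefficients independent of N, such that Δ_N(fg) = Δ_N(f)·g + f·Δ_N(g) + (1/N²)·h for all N (asymptotic product rule: the Laplacian cross term is O(1/N²)). -/
open Matrix MeasureTheory
open scoped BigOperators

/-- A trace polynomial datum: a formal (N-independent) linear combination of terms
`c · U^k · tr(U^{l₁}) ⋯ tr(U^{l_M})`, recorded as a list of triples `(c, k, [l₁,…,l_M])`. -/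
abbrev TPDatum : Type := List (ℂ × ℕ × List ℕ)

/-- Evaluation of a trace polynomial datum as a matrix-valued function on `N×N` matrices. -/
noncomputable def TPDatum.eval {N : ℕ} (d : TPDatum) (U : Matrix (Fin N) (Fin N) ℂ) :
    Matrix (Fin N) (Fin N) ℂ :=
  (d.map fun t => (t.1 * (t.2.2.map fun l => ntr (U ^ l)).prod) • U ^ t.2.1).sum

/-- A trace polynomial datum is scalar if no term contains an untraced power of `U`. -/
def TPDatum.IsScalar (d : TPDatum) : Prop := ∀ t ∈ d, t.2.1 = 0

namespace APR
open NormedSpace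

/-- positions-with-erasures of a list -/
def dts : List ℕ → List (ℕ × List ℕ)
  | [] => []
  | l :: L => (l, L) :: (dts L).map fun p => (p.1, l :: p.2)

noncomputable def Pl {N : ℕ} (U : Matrix (Fin N) (Fin N) ℂ) (L : List ℕ) : ℂ :=
  (L.map fun l => ntr (U ^ l)).prod

noncomputable def q {N : ℕ} (U Y : Matrix (Fin N) (Fin N) ℂ) (l : ℕ) : ℂ := ntr (U ^ l * Y)

noncomputable def dPl {N : ℕ} (U Y : Matrix (Fin N) (Fin N) ℂ) (L : List ℕ) : ℂ :=
  ((dts L).map fun p => (p.1 : ℂ) * Pl U p.2 * q U Y p.1).sum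

noncomputable def Dpow {N : ℕ} (U Y : Matrix (Fin N) (Fin N) ℂ) (k : ℕ) :
    Matrix (Fin N) (Fin N) ℂ :=
  ∑ a ∈ Finset.range k, U ^ (a + 1) * Y * U ^ (k - 1 - a)

section Calc
attribute [local instance] Matrix.linftyOpNormedRing Matrix.linftyOpNormedAlgebra

variable {N : ℕ} (X U : Matrix (Fin N) (Fin N) ℂ)

noncomputable def entryCLM (j k : Fin N) : Matrix (Fin N) (Fin N) ℂ →L[ℝ] ℂ :=
  LinearMap.toContinuousLinearMap
    { toFun := fun A => A j k, map_add' := by intros; rfl, map_smul' := by intros; rfl }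

noncomputable def ntrCLM : Matrix (Fin N) (Fin N) ℂ →L[ℝ] ℂ :=
  LinearMap.toContinuousLinearMap
    { toFun := fun A => ntr A,
      map_add' := by intros; simp [ntr, mul_add],
      map_smul' := by intros; simp [ntr, Matrix.trace_smul]; ring }

theorem hasDerivAt_entry {F : ℝ → Matrix (Fin N) (Fin N) ℂ} {F' : Matrix (Fin N) (Fin N) ℂ}
    {s : ℝ} (j k : Fin N) (hF : HasDerivAt F F' s) : HasDerivAt (fun s => F s j k) (F' j k) s := by
  exact ((entryCLM j k).hasFDerivAt (x := F s)).comp_hasDerivAt s hF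

theorem hasDerivAt_ntr {F : ℝ → Matrix (Fin N) (Fin N) ℂ} {F' : Matrix (Fin N) (Fin N) ℂ}
    {s : ℝ} (hF : HasDerivAt F F' s) : HasDerivAt (fun s => ntr (F s)) (ntr F') s := by
  exact ((ntrCLM (N := N)).hasFDerivAt (x := F s)).comp_hasDerivAt s hF

theorem hasDerivAt_V (s : ℝ) :
    HasDerivAt (fun s : ℝ => U * exp (s • X)) (U * exp (s • X) * X) s := by
  have h := (hasDerivAt_exp_smul_const (𝕂 := ℝ) X s).const_mul U
  rw [mul_assoc]; exact h

theorem hasDerivAt_V_pow (k : ℕ) (s : ℝ) :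
    HasDerivAt (fun s : ℝ => (U * exp (s • X)) ^ k)
      (Dpow (U * exp (s • X)) X k) s := by
  induction k with
  | zero =>
    simp only [pow_zero, Dpow, Finset.range_zero, Finset.sum_empty]
    exact hasDerivAt_const s _
  | succ k ih =>
    have h : HasDerivAt (fun s : ℝ => (U * exp (s • X)) ^ k * (U * exp (s • X))) _ s :=
      ih.fun_mul (hasDerivAt_V X U s)
    have : (fun s : ℝ => (U * exp (s • X)) ^ (k+1))
        = fun s : ℝ => (U * exp (s • X)) ^ k * (U * exp (s • X)) := by
      funext s; rw [pow_succ]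
    rw [this]
    convert h using 1
    set V := U * exp (s • X)
    rw [Dpow, Dpow, Finset.sum_range_succ, Finset.sum_mul]
    have e1 : ∀ a ∈ Finset.range k, V ^ (a+1) * X * V ^ (k+1-1-a) = V ^ (a+1) * X * V ^ (k-1-a) * V := by
      intro a ha
      rw [Finset.mem_range] at ha
      have ha' : k + 1 - 1 - a = (k - 1 - a) + 1 := by omega
      rw [mul_assoc, mul_assoc, ← pow_succ, ha', ← mul_assoc]
    rw [Finset.sum_congr rfl e1]
    have e2 : V ^ (k+1) * X * V ^ (k+1-1-k) = V ^ k * (V * X) := by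
      simp [pow_succ, mul_assoc]
    rw [e2]

end Calc
end APR

namespace APR
open NormedSpace

/- ## list helpers -/
theorem lsum_mul_right {α : Type*} (l : List α) (F : α → ℂ) (c : ℂ) :
    (l.map fun a => F a * c).sum = (l.map F).sum * c := by
  induction l with
  | nil => simp
  | cons a l ih => simp [ih, add_mul]

theorem lsum_mul_left {α : Type*} (l : List α) (F : α → ℂ) (c : ℂ) :
    (l.map fun a => c * F a).sum = c * (l.map F).sum := by
  induction l with
  | nil => simp
  | cons a l ih => simp [ih, mul_add]

theorem fsum_lsum {ι α : Type*} (s : Finset ι) (l : List α) (F : α → ι → ℂ) :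
    (∑ i ∈ s, (l.map fun a => F a i).sum) = (l.map fun a => ∑ i ∈ s, F a i).sum := by
  induction l with
  | nil => simp
  | cons a l ih => simp [Finset.sum_add_distrib, ih]

theorem lsum_mul_lsum {α β : Type*} (l₁ : List α) (l₂ : List β) (F : α → ℂ) (G : β → ℂ) :
    (l₁.map F).sum * (l₂.map G).sum = ((l₁.flatMap fun a => l₂.map fun b => F a * G b).sum) := by
  induction l₁ with
  | nil => simp
  | cons a l ih => simp [add_mul, ih, ← lsum_mul_left]

theorem lsum_flatMap {α β : Type*} (l : List α) (G : α → List β) (F : β → ℂ) :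
    ((l.flatMap G).map F).sum = (l.map fun a => ((G a).map F).sum).sum := by
  induction l with
  | nil => simp
  | cons a l ih => simp [ih]

theorem lsum_apply {N : ℕ} (l : List (Matrix (Fin N) (Fin N) ℂ)) (j k : Fin N) :
    l.sum j k = (l.map fun A => A j k).sum := by
  induction l with
  | nil => simp
  | cons a l ih => simp [Matrix.add_apply, ih]

theorem diff_lsum {α : Type*} (l : List α) (F : α → ℝ → ℂ) (x : ℝ)
    (h : ∀ a ∈ l, DifferentiableAt ℝ (F a) x) :
    DifferentiableAt ℝ (fun s => (l.map fun a => F a s).sum) x := by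
  induction l with
  | nil => simpa using differentiableAt_const (0 : ℂ)
  | cons a l ih =>
    simp only [List.map_cons, List.sum_cons]
    exact (h a (by simp)).add (ih fun b hb => h b (by simp [hb]))

/- ## trace lemmas -/
theorem ntr_sum {N : ℕ} {ι : Type*} (s : Finset ι) (F : ι → Matrix (Fin N) (Fin N) ℂ) :
    ntr (∑ i ∈ s, F i) = ∑ i ∈ s, ntr (F i) := by
  simp [ntr, Matrix.trace_sum, Finset.mul_sum]

theorem ntr_mul_comm {N : ℕ} (A B : Matrix (Fin N) (Fin N) ℂ) : ntr (A * B) = ntr (B * A) := by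
  simp [ntr, Matrix.trace_mul_comm A B]

theorem ntr_smul {N : ℕ} (c : ℂ) (A : Matrix (Fin N) (Fin N) ℂ) : ntr (c • A) = c * ntr A := by
  simp [ntr, Matrix.trace_smul, smul_eq_mul]; ring

theorem ntr_Dpow {N : ℕ} (W Y : Matrix (Fin N) (Fin N) ℂ) (l : ℕ) :
    ntr (Dpow W Y l) = (l : ℂ) * ntr (W ^ l * Y) := by
  rw [Dpow, ntr_sum]
  have : ∀ a ∈ Finset.range l, ntr (W ^ (a+1) * Y * W ^ (l-1-a)) = ntr (W ^ l * Y) := by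
    intro a ha
    rw [Finset.mem_range] at ha
    have e : l - 1 - a + (a + 1) = l := by omega
    rw [ntr_mul_comm, ← mul_assoc, ← pow_add, e]
  rw [Finset.sum_congr rfl this, Finset.sum_const, Finset.card_range, nsmul_eq_mul]

section Calc2
attribute [local instance] Matrix.linftyOpNormedRing Matrix.linftyOpNormedAlgebra

variable {N : ℕ} (X U : Matrix (Fin N) (Fin N) ℂ)

theorem hasDerivAt_ntr_pow (l : ℕ) (s : ℝ) :
    HasDerivAt (fun s : ℝ => ntr ((U * exp (s • X)) ^ l))
      ((l : ℂ) * q (U * exp (s • X)) X l) s := by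
  have h := hasDerivAt_ntr (hasDerivAt_V_pow X U l s)
  rwa [ntr_Dpow] at h

theorem hasDerivAt_q (l : ℕ) (s : ℝ) :
    HasDerivAt (fun s : ℝ => q (U * exp (s • X)) X l)
      (ntr (Dpow (U * exp (s • X)) X l * X)) s :=
  hasDerivAt_ntr ((hasDerivAt_V_pow X U l s).mul_const X)

theorem hasDerivAt_Pl (L : List ℕ) (s : ℝ) :
    HasDerivAt (fun s : ℝ => Pl (U * exp (s • X)) L)
      (dPl (U * exp (s • X)) X L) s := by
  induction L with
  | nil => simpa [Pl, dPl, dts] using hasDerivAt_const s (1 : ℂ)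
  | cons l L ih =>
    have h : HasDerivAt (fun s : ℝ => ntr ((U * exp (s • X)) ^ l) * Pl (U * exp (s • X)) L) _ s :=
      (hasDerivAt_ntr_pow X U l s).fun_mul ih
    have e : (fun s : ℝ => Pl (U * exp (s • X)) (l :: L))
        = fun s : ℝ => ntr ((U * exp (s • X)) ^ l) * Pl (U * exp (s • X)) L := by
      funext s; simp [Pl]
    rw [e]
    convert h using 1
    set V := U * exp (s • X)
    rw [dPl, dts, List.map_cons, List.sum_cons, List.map_map]
    have e2 : ((fun p : ℕ × List ℕ => (p.1 : ℂ) * Pl V p.2 * q V X p.1) ∘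
        fun p : ℕ × List ℕ => (p.1, l :: p.2))
        = fun p : ℕ × List ℕ => ntr (V ^ l) * ((p.1 : ℂ) * Pl V p.2 * q V X p.1) := by
      funext p; simp [Pl]; ring
    rw [e2, lsum_mul_left, ← dPl]
    simp [Pl]
    ring
end Calc2
end APR

namespace APR
open NormedSpace

noncomputable def dTermM {N : ℕ} (W Y : Matrix (Fin N) (Fin N) ℂ) (t : ℂ × ℕ × List ℕ) :
    Matrix (Fin N) (Fin N) ℂ :=
  (t.1 * dPl W Y t.2.2) • W ^ t.2.1 + (t.1 * Pl W t.2.2) • Dpow W Y t.2.1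

noncomputable def dEval {N : ℕ} (W Y : Matrix (Fin N) (Fin N) ℂ) (d : TPDatum) :
    Matrix (Fin N) (Fin N) ℂ :=
  (d.map fun t => dTermM W Y t).sum

noncomputable def gval {N : ℕ} (d : TPDatum) (W : Matrix (Fin N) (Fin N) ℂ) : ℂ :=
  (d.map fun t => t.1 * Pl W t.2.2).sum

noncomputable def dgval {N : ℕ} (d : TPDatum) (W Y : Matrix (Fin N) (Fin N) ℂ) : ℂ :=
  (d.map fun t => t.1 * dPl W Y t.2.2).sum

section Calc3
attribute [local instance] Matrix.linftyOpNormedRing Matrix.linftyOpNormedAlgebra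

theorem hasDerivAt_lsum {α : Type*} {E : Type*} [NormedAddCommGroup E] [NormedSpace ℝ E]
    (l : List α) (F : α → ℝ → E) (F' : α → E) {s : ℝ} (h : ∀ a ∈ l, HasDerivAt (F a) (F' a) s) :
    HasDerivAt (fun s => (l.map fun a => F a s).sum) ((l.map F').sum) s := by
  induction l with
  | nil => simpa using hasDerivAt_const s (0 : E)
  | cons a l ih =>
    simp only [List.map_cons, List.sum_cons]
    exact (h a (by simp)).add (ih fun b hb => h b (by simp [hb]))

variable {N : ℕ} (X U : Matrix (Fin N) (Fin N) ℂ)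

theorem hasDerivAt_term (t : ℂ × ℕ × List ℕ) (s : ℝ) :
    HasDerivAt (fun s : ℝ => (t.1 * Pl (U * exp (s • X)) t.2.2) • (U * exp (s • X)) ^ t.2.1)
      (dTermM (U * exp (s • X)) X t) s := by
  have h : HasDerivAt (fun s : ℝ => (t.1 * Pl (U * exp (s • X)) t.2.2) • (U * exp (s • X)) ^ t.2.1) _ s :=
    ((hasDerivAt_Pl X U t.2.2 s).const_mul t.1).fun_smul (hasDerivAt_V_pow X U t.2.1 s)
  simpa [dTermM, add_comm] using h

theorem hasDerivAt_eval (d : TPDatum) (s : ℝ) :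
    HasDerivAt (fun s : ℝ => TPDatum.eval d (U * exp (s • X)))
      (dEval (U * exp (s • X)) X d) s := by
  have h := hasDerivAt_lsum d
    (fun t => fun s : ℝ => (t.1 * Pl (U * exp (s • X)) t.2.2) • (U * exp (s • X)) ^ t.2.1)
    (fun t => dTermM (U * exp (s • X)) X t) (fun t _ => hasDerivAt_term X U t s)
  have e : (fun s : ℝ => TPDatum.eval d (U * exp (s • X)))
      = fun s : ℝ => (d.map fun t =>
          (t.1 * Pl (U * exp (s • X)) t.2.2) • (U * exp (s • X)) ^ t.2.1).sum := by
    funext s; simp [TPDatum.eval, Pl]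
  rw [e]; exact h

theorem hasDerivAt_gval (d : TPDatum) (s : ℝ) :
    HasDerivAt (fun s : ℝ => gval d (U * exp (s • X)))
      (dgval d (U * exp (s • X)) X) s := by
  exact hasDerivAt_lsum d (fun t => fun s : ℝ => t.1 * Pl (U * exp (s • X)) t.2.2)
    (fun t => t.1 * dPl (U * exp (s • X)) X t.2.2)
    (fun t _ => (hasDerivAt_Pl X U t.2.2 s).const_mul t.1)

theorem diff_dPl (L : List ℕ) (x : ℝ) :
    DifferentiableAt ℝ (fun s : ℝ => dPl (U * exp (s • X)) X L) x := by
  have e : (fun s : ℝ => dPl (U * exp (s • X)) X L)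
      = fun s : ℝ => ((dts L).map fun p =>
          (p.1 : ℂ) * Pl (U * exp (s • X)) p.2 * q (U * exp (s • X)) X p.1).sum := by
    funext s; rfl
  rw [e]
  refine diff_lsum _ _ _ fun p _ => ?_
  exact ((differentiableAt_const _).mul (hasDerivAt_Pl X U p.2 x).differentiableAt).mul
    (hasDerivAt_q X U p.1 x).differentiableAt

theorem diff_dgval (d : TPDatum) (x : ℝ) :
    DifferentiableAt ℝ (fun s : ℝ => dgval d (U * exp (s • X)) X) x := by
  refine diff_lsum _ _ _ fun t _ => ?_
  exact (differentiableAt_const _).mul (diff_dPl X U t.2.2 x)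

theorem diff_Dpow_entry (k : ℕ) (j k' : Fin N) (x : ℝ) :
    DifferentiableAt ℝ (fun s : ℝ => Dpow (U * exp (s • X)) X k j k') x := by
  have e : (fun s : ℝ => Dpow (U * exp (s • X)) X k j k')
      = fun s : ℝ => ∑ a ∈ Finset.range k,
          ((U * exp (s • X)) ^ (a+1) * X * (U * exp (s • X)) ^ (k-1-a)) j k' := by
    funext s; simp [Dpow, Matrix.sum_apply]
  rw [e]
  refine DifferentiableAt.fun_sum fun a _ => ?_
  exact (hasDerivAt_entry j k'
    (((hasDerivAt_V_pow X U (a+1) x).mul_const X).mul (hasDerivAt_V_pow X U (k-1-a) x))).differentiableAt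

theorem diff_dEval_entry (d : TPDatum) (j k : Fin N) (x : ℝ) :
    DifferentiableAt ℝ (fun s : ℝ => dEval (U * exp (s • X)) X d j k) x := by
  have e : (fun s : ℝ => dEval (U * exp (s • X)) X d j k)
      = fun s : ℝ => (d.map fun t => dTermM (U * exp (s • X)) X t j k).sum := by
    funext s; rw [dEval, lsum_apply, List.map_map]; rfl
  rw [e]
  refine diff_lsum _ _ _ fun t _ => ?_
  have e2 : (fun s : ℝ => dTermM (U * exp (s • X)) X t j k)
      = fun s : ℝ => (t.1 * dPl (U * exp (s • X)) X t.2.2) * (((U * exp (s • X)) ^ t.2.1) j k)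
        + (t.1 * Pl (U * exp (s • X)) t.2.2) * (Dpow (U * exp (s • X)) X t.2.1 j k) := by
    funext s; simp [dTermM, Matrix.add_apply, Matrix.smul_apply, smul_eq_mul]
  rw [e2]
  exact (((differentiableAt_const _).mul (diff_dPl X U t.2.2 x)).mul
      (hasDerivAt_entry j k (hasDerivAt_V_pow X U t.2.1 x)).differentiableAt).add
    (((differentiableAt_const _).mul (hasDerivAt_Pl X U t.2.2 x).differentiableAt).mul
      (diff_Dpow_entry X U t.2.1 j k x))

end Calc3

/- ## second-derivative arithmetic -/
theorem iter2_eq {Φ Φ₁ : ℝ → ℂ} (h1 : ∀ s, HasDerivAt Φ (Φ₁ s) s)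
    (h2 : DifferentiableAt ℝ Φ₁ 0) : iteratedDeriv 2 Φ 0 = deriv Φ₁ 0 := by
  have : deriv Φ = Φ₁ := funext fun s => (h1 s).deriv
  rw [show (2:ℕ) = 1 + 1 from rfl, iteratedDeriv_succ, iteratedDeriv_one, this]

theorem iter2_mul {Φ Ψ Φ₁ Ψ₁ : ℝ → ℂ} (hΦ : ∀ s, HasDerivAt Φ (Φ₁ s) s)
    (hΨ : ∀ s, HasDerivAt Ψ (Ψ₁ s) s) (dΦ : DifferentiableAt ℝ Φ₁ 0)
    (dΨ : DifferentiableAt ℝ Ψ₁ 0) :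
    iteratedDeriv 2 (fun s => Φ s * Ψ s) 0
      = deriv Φ₁ 0 * Ψ 0 + 2 * (Φ₁ 0 * Ψ₁ 0) + Φ 0 * deriv Ψ₁ 0 := by
  have hd : ∀ s, HasDerivAt (fun s => Φ s * Ψ s) (Φ₁ s * Ψ s + Φ s * Ψ₁ s) s :=
    fun s => (hΦ s).mul (hΨ s)
  have h2 : DifferentiableAt ℝ (fun s => Φ₁ s * Ψ s + Φ s * Ψ₁ s) 0 :=
    (dΦ.mul (hΨ 0).differentiableAt).add ((hΦ 0).differentiableAt.mul dΨ)
  rw [iter2_eq hd h2,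
    ((dΦ.hasDerivAt.fun_mul (hΨ 0)).fun_add ((hΦ 0).fun_mul dΨ.hasDerivAt)).deriv]
  ring

theorem iter2_mul_const {Φ Φ₁ : ℝ → ℂ} (c : ℂ) (hΦ : ∀ s, HasDerivAt Φ (Φ₁ s) s)
    (dΦ : DifferentiableAt ℝ Φ₁ 0) :
    iteratedDeriv 2 (fun s => Φ s * c) 0 = deriv Φ₁ 0 * c := by
  rw [iter2_eq (fun s => (hΦ s).mul_const c) (dΦ.mul_const c),
    (dΦ.hasDerivAt.mul_const c).deriv]

end APR

namespace APR

theorem ntr_add {N : ℕ} (A B : Matrix (Fin N) (Fin N) ℂ) : ntr (A + B) = ntr A + ntr B := by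
  simp [ntr, Matrix.trace_add, mul_add]

variable {N : ℕ} {ι : Type} [Fintype ι] [DecidableEq ι]

theorem magic_skew {X : ι → Matrix (Fin N) (Fin N) ℂ} (hX : IsONB X) (hN : 0 < N)
    {A : Matrix (Fin N) (Fin N) ℂ} (hA : IsSkewHerm A) :
    ∑ i, ntr (A * X i) • X i = (-((N:ℂ)^2)⁻¹) • A := by
  obtain ⟨hskew, -, hspan⟩ := hX
  have hNC : (N : ℂ) ≠ 0 := Nat.cast_ne_zero.2 hN.ne'
  have hz : ∀ i, Matrix.trace ((X i)ᴴ * A) = -(Matrix.trace (X i * A)) := by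
    intro i; rw [hskew i, Matrix.neg_mul, Matrix.trace_neg]
  have hreal : ∀ i, ((Matrix.trace (X i * A)).re : ℂ) = Matrix.trace (X i * A) := by
    intro i
    rw [← Complex.conj_eq_iff_re]
    calc (starRingEnd ℂ) (Matrix.trace (X i * A)) = Matrix.trace ((X i * A)ᴴ) := by
          rw [Matrix.trace_conjTranspose]; rfl
      _ = Matrix.trace (Aᴴ * (X i)ᴴ) := by rw [Matrix.conjTranspose_mul]
      _ = Matrix.trace (X i * A) := by
          rw [hA, hskew i, Matrix.neg_mul, Matrix.mul_neg, neg_neg, Matrix.trace_mul_comm]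
  have hA2 : A = ∑ i, (-((N:ℂ) * Matrix.trace (X i * A))) • X i := by
    conv_lhs => rw [hspan A hA]
    refine Finset.sum_congr rfl fun i _ => ?_
    rw [← algebraMap_smul ℂ ((N : ℝ) * (Matrix.trace ((X i)ᴴ * A)).re) (X i)]
    congr 1
    rw [hz i, Complex.neg_re, Complex.coe_algebraMap, Complex.ofReal_mul, Complex.ofReal_neg, hreal i,
      Complex.ofReal_natCast]
    ring
  have key : ∀ i, ntr (A * X i) • X i
      = (-((N:ℂ)^2)⁻¹) • ((-((N:ℂ) * Matrix.trace (X i * A))) • X i) := by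
    intro i
    rw [smul_smul]
    congr 1
    rw [ntr, Matrix.trace_mul_comm]
    field_simp
  rw [Finset.sum_congr rfl fun i _ => key i, ← Finset.smul_sum, ← hA2]

theorem magic {X : ι → Matrix (Fin N) (Fin N) ℂ} (hX : IsONB X) (hN : 0 < N)
    (A : Matrix (Fin N) (Fin N) ℂ) :
    ∑ i, ntr (A * X i) • X i = (-((N:ℂ)^2)⁻¹) • A := by
  have hadd : ∀ B C : Matrix (Fin N) (Fin N) ℂ, ∑ i, ntr ((B + C) * X i) • X i
      = (∑ i, ntr (B * X i) • X i) + ∑ i, ntr (C * X i) • X i := by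
    intro B C
    rw [← Finset.sum_add_distrib]
    refine Finset.sum_congr rfl fun i _ => ?_
    rw [Matrix.add_mul, ntr_add, add_smul]
  have hlin : ∀ (c : ℂ) (B : Matrix (Fin N) (Fin N) ℂ), ∑ i, ntr ((c • B) * X i) • X i
      = c • ∑ i, ntr (B * X i) • X i := by
    intro c B
    rw [Finset.smul_sum]
    refine Finset.sum_congr rfl fun i _ => ?_
    rw [Matrix.smul_mul, ntr_smul, mul_smul]
  set B := A - Aᴴ with hB
  set C := Complex.I • (A + Aᴴ) with hC
  have hBs : IsSkewHerm B := by
    simp [IsSkewHerm, hB, Matrix.conjTranspose_sub, neg_sub]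
  have hCs : IsSkewHerm C := by
    simp only [IsSkewHerm, hC, Matrix.conjTranspose_smul, Matrix.conjTranspose_add,
      Matrix.conjTranspose_conjTranspose, Complex.star_def, Complex.conj_I, neg_smul]
    rw [add_comm Aᴴ A]
  have hdecomp : A = (2⁻¹:ℂ) • B + (-Complex.I/2) • C := by
    have h1 : (-Complex.I/2) * Complex.I = 2⁻¹ := by
      linear_combination (-2⁻¹ : ℂ) * Complex.I_mul_I
    rw [hB, hC, smul_smul, h1, ← smul_add]
    have h2 : A - Aᴴ + (A + Aᴴ) = (2:ℂ) • A := by rw [two_smul]; abel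
    rw [h2, smul_smul]
    norm_num
  calc ∑ i, ntr (A * X i) • X i
      = ∑ i, ntr (((2⁻¹:ℂ) • B + (-Complex.I/2) • C) * X i) • X i := by rw [← hdecomp]
    _ = (2⁻¹:ℂ) • ((-((N:ℂ)^2)⁻¹) • B) + (-Complex.I/2) • ((-((N:ℂ)^2)⁻¹) • C) := by
        rw [hadd, hlin, hlin, magic_skew ⟨hX.1, hX.2.1, hX.2.2⟩ hN hBs,
          magic_skew ⟨hX.1, hX.2.1, hX.2.2⟩ hN hCs]
    _ = (-((N:ℂ)^2)⁻¹) • A := by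
        rw [smul_comm (2⁻¹:ℂ), smul_comm (-Complex.I/2), ← smul_add, ← hdecomp]

end APR

namespace APR

theorem lsum_mul_nested {α β : Type*} (l₁ : List α) (l₂ : List β) (F : α → ℂ) (G : β → ℂ) :
    (l₁.map F).sum * (l₂.map G).sum
      = (l₁.map fun a => (l₂.map fun b => F a * G b).sum).sum := by
  induction l₁ with
  | nil => simp
  | cons a l ih => simp [add_mul, ih, ← lsum_mul_left]

theorem Pl_append {N : ℕ} (U : Matrix (Fin N) (Fin N) ℂ) (L₁ L₂ : List ℕ) :
    Pl U (L₁ ++ L₂) = Pl U L₁ * Pl U L₂ := by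
  simp [Pl]

theorem Pl_cons {N : ℕ} (U : Matrix (Fin N) (Fin N) ℂ) (l : ℕ) (L : List ℕ) :
    Pl U (l :: L) = ntr (U ^ l) * Pl U L := by
  simp [Pl]

theorem eval_apply {N : ℕ} (d : TPDatum) (U : Matrix (Fin N) (Fin N) ℂ) (j k : Fin N) :
    TPDatum.eval d U j k = (d.map fun t => (t.1 * Pl U t.2.2) * ((U ^ t.2.1) j k)).sum := by
  rw [TPDatum.eval, lsum_apply, List.map_map]
  refine congrArg List.sum (List.map_congr_left fun t _ => ?_)
  simp [Matrix.smul_apply, smul_eq_mul, Pl]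

variable {N : ℕ} {ι : Type} [Fintype ι] [DecidableEq ι]

theorem magic_qq {X : ι → Matrix (Fin N) (Fin N) ℂ} (hX : IsONB X) (hN : 0 < N)
    (U : Matrix (Fin N) (Fin N) ℂ) (a b : ℕ) :
    ∑ i, q U (X i) a * q U (X i) b = -((N:ℂ)^2)⁻¹ * ntr (U ^ (a+b)) := by
  calc ∑ i, q U (X i) a * q U (X i) b
      = ntr (U ^ b * ∑ i, ntr (U ^ a * X i) • X i) := by
        rw [Matrix.mul_sum, ntr_sum]
        refine Finset.sum_congr rfl fun i _ => ?_
        rw [Matrix.mul_smul, ntr_smul, q, q]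
    _ = ntr (U ^ b * ((-((N:ℂ)^2)⁻¹) • U ^ a)) := by rw [magic hX hN]
    _ = -((N:ℂ)^2)⁻¹ * ntr (U ^ (a+b)) := by
        rw [Matrix.mul_smul, ntr_smul, ← pow_add, Nat.add_comm b a]
        

theorem magic_qE {X : ι → Matrix (Fin N) (Fin N) ℂ} (hX : IsONB X) (hN : 0 < N)
    (U C D : Matrix (Fin N) (Fin N) ℂ) (b : ℕ) (j k : Fin N) :
    ∑ i, q U (X i) b * ((C * X i * D) j k) = -((N:ℂ)^2)⁻¹ * ((C * U ^ b * D) j k) := by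
  calc ∑ i, q U (X i) b * ((C * X i * D) j k)
      = ((C * (∑ i, ntr (U ^ b * X i) • X i) * D) j k) := by
        rw [Matrix.mul_sum, Matrix.sum_mul, Matrix.sum_apply]
        refine Finset.sum_congr rfl fun i _ => ?_
        rw [Matrix.mul_smul, Matrix.smul_mul, Matrix.smul_apply, smul_eq_mul, q]
    _ = ((C * ((-((N:ℂ)^2)⁻¹) • U ^ b) * D) j k) := by rw [magic hX hN]
    _ = -((N:ℂ)^2)⁻¹ * ((C * U ^ b * D) j k) := by
        rw [Matrix.mul_smul, Matrix.smul_mul, Matrix.smul_apply, smul_eq_mul]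

theorem crossA {X : ι → Matrix (Fin N) (Fin N) ℂ} (hX : IsONB X) (hN : 0 < N)
    (U : Matrix (Fin N) (Fin N) ℂ) (L L' : List ℕ) :
    ∑ i, dPl U (X i) L * dPl U (X i) L'
      = -((N:ℂ)^2)⁻¹ * ((dts L).map fun p => ((dts L').map fun p' =>
          (p.1:ℂ) * p'.1 * Pl U p.2 * Pl U p'.2 * ntr (U ^ (p.1 + p'.1))).sum).sum := by
  have e1 : ∀ i, dPl U (X i) L * dPl U (X i) L'
      = ((dts L).map fun p => ((dts L').map fun p' =>
          ((p.1:ℂ) * Pl U p.2 * q U (X i) p.1)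
            * ((p'.1:ℂ) * Pl U p'.2 * q U (X i) p'.1)).sum).sum := by
    intro i; rw [dPl, dPl, lsum_mul_nested]
  rw [Finset.sum_congr rfl fun i _ => e1 i, fsum_lsum, ← lsum_mul_left]
  congr 1
  refine List.map_congr_left fun p _ => ?_
  rw [fsum_lsum, ← lsum_mul_left]
  congr 1
  refine List.map_congr_left fun p' _ => ?_
  have e2 : ∀ i : ι, ((p.1:ℂ) * Pl U p.2 * q U (X i) p.1)
      * ((p'.1:ℂ) * Pl U p'.2 * q U (X i) p'.1)
      = ((p.1:ℂ) * p'.1 * Pl U p.2 * Pl U p'.2) * (q U (X i) p.1 * q U (X i) p'.1) := by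
    intro i; ring
  rw [Finset.sum_congr rfl fun i _ => e2 i, ← Finset.mul_sum, magic_qq hX hN U p.1 p'.1]
  ring

theorem crossB {X : ι → Matrix (Fin N) (Fin N) ℂ} (hX : IsONB X) (hN : 0 < N)
    (U : Matrix (Fin N) (Fin N) ℂ) (k₀ : ℕ) (L' : List ℕ) (j k : Fin N) :
    ∑ i, (Dpow U (X i) k₀ j k) * dPl U (X i) L'
      = -((N:ℂ)^2)⁻¹ * (k₀:ℂ) * ((dts L').map fun p' =>
          (p'.1:ℂ) * Pl U p'.2 * ((U ^ (k₀ + p'.1)) j k)).sum := by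
  have e1 : ∀ i, (Dpow U (X i) k₀ j k) * dPl U (X i) L'
      = ∑ a ∈ Finset.range k₀, ((dts L').map fun p' =>
          ((p'.1:ℂ) * Pl U p'.2)
            * (q U (X i) p'.1 * ((U ^ (a+1) * X i * U ^ (k₀-1-a)) j k))).sum := by
    intro i
    rw [Dpow, Matrix.sum_apply, Finset.sum_mul]
    refine Finset.sum_congr rfl fun a _ => ?_
    rw [dPl, ← lsum_mul_left]
    refine congrArg List.sum (List.map_congr_left fun p' _ => ?_)
    ring
  rw [Finset.sum_congr rfl fun i _ => e1 i, Finset.sum_comm]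
  have e2 : ∀ a ∈ Finset.range k₀, (∑ i, ((dts L').map fun p' =>
      ((p'.1:ℂ) * Pl U p'.2)
        * (q U (X i) p'.1 * ((U ^ (a+1) * X i * U ^ (k₀-1-a)) j k))).sum)
      = ((dts L').map fun p' =>
          -((N:ℂ)^2)⁻¹ * ((p'.1:ℂ) * Pl U p'.2 * ((U ^ (k₀ + p'.1)) j k))).sum := by
    intro a ha
    rw [Finset.mem_range] at ha
    rw [fsum_lsum]
    refine congrArg List.sum (List.map_congr_left fun p' _ => ?_)
    rw [← Finset.mul_sum, magic_qE hX hN U (U ^ (a+1)) (U ^ (k₀-1-a)) p'.1 j k]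
    rw [← pow_add, ← pow_add]
    have harith : a + 1 + p'.1 + (k₀ - 1 - a) = k₀ + p'.1 := by omega
    rw [harith]
    ring
  rw [Finset.sum_congr rfl e2, Finset.sum_const, Finset.card_range, nsmul_eq_mul,
    lsum_mul_left]
  ring

end APR

namespace APR

theorem mul_lsum_eq_lsum {α : Type*} (c : ℂ) (l : List α) (F G : α → ℂ)
    (h : ∀ a ∈ l, c * F a = G a) : c * (l.map F).sum = (l.map G).sum := by
  rw [← lsum_mul_left]
  exact congrArg List.sum (List.map_congr_left h)

theorem mul_lsum2_eq {α β : Type*} (c : ℂ) (l : List α) (m : α → List β)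
    (F G : α → β → ℂ) (h : ∀ a ∈ l, ∀ b ∈ m a, c * F a b = G a b) :
    c * (l.map fun a => ((m a).map (F a)).sum).sum
      = (l.map fun a => ((m a).map (G a)).sum).sum :=
  mul_lsum_eq_lsum c l _ _ fun a ha => mul_lsum_eq_lsum c (m a) _ _ fun b hb => h a ha b hb

/-- the trace-polynomial datum produced by the cross term of a single pair of terms -/
def htt (t t' : ℂ × ℕ × List ℕ) : TPDatum :=
  ((dts t'.2.2).map fun p' =>
    ((-2 : ℂ) * t.1 * t'.1 * (t.2.1 : ℂ) * (p'.1 : ℂ), t.2.1 + p'.1, t.2.2 ++ p'.2))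
  ++ ((dts t.2.2).flatMap fun p => (dts t'.2.2).map fun p' =>
    ((-2 : ℂ) * t.1 * t'.1 * (p.1 : ℂ) * (p'.1 : ℂ), t.2.1, (p.1 + p'.1) :: (p.2 ++ p'.2)))

/-- the trace-polynomial datum `h` witnessing the asymptotic product rule -/
def hdat (f g : TPDatum) : TPDatum :=
  f.flatMap fun t => g.flatMap fun t' => htt t t'

theorem htt_eval {N : ℕ} (t t' : ℂ × ℕ × List ℕ) (U : Matrix (Fin N) (Fin N) ℂ) (j k : Fin N) :
    TPDatum.eval (htt t t') U j k
      = ((dts t'.2.2).map fun p' =>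
          ((-2 : ℂ) * t.1 * t'.1 * (t.2.1 : ℂ) * (p'.1 : ℂ))
            * (Pl U t.2.2 * Pl U p'.2) * ((U ^ (t.2.1 + p'.1)) j k)).sum
        + ((dts t.2.2).map fun p => ((dts t'.2.2).map fun p' =>
          ((-2 : ℂ) * t.1 * t'.1 * (p.1 : ℂ) * (p'.1 : ℂ))
            * (ntr (U ^ (p.1 + p'.1)) * Pl U p.2 * Pl U p'.2) * ((U ^ t.2.1) j k)).sum).sum := by
  rw [htt, eval_apply, List.map_append, List.sum_append]
  congr 1
  · rw [List.map_map]
    refine congrArg List.sum (List.map_congr_left fun p' _ => ?_)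
    simp only [Function.comp_apply, Pl_append]
  · rw [lsum_flatMap]
    refine congrArg List.sum (List.map_congr_left fun p _ => ?_)
    rw [List.map_map]
    refine congrArg List.sum (List.map_congr_left fun p' _ => ?_)
    simp only [Function.comp_apply, Pl_cons, Pl_append]
    ring

theorem dEval_apply {N : ℕ} (U Y : Matrix (Fin N) (Fin N) ℂ) (d : TPDatum) (j k : Fin N) :
    dEval U Y d j k = (d.map fun t => dTermM U Y t j k).sum := by
  rw [dEval, lsum_apply, List.map_map]
  rfl

variable {N : ℕ} {ι : Type} [Fintype ι] [DecidableEq ι]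

theorem cross_pair {X : ι → Matrix (Fin N) (Fin N) ℂ} (hX : IsONB X) (hN : 0 < N)
    (U : Matrix (Fin N) (Fin N) ℂ) (t t' : ℂ × ℕ × List ℕ) (j k : Fin N) :
    ∑ i, 2 * (dTermM U (X i) t j k * (t'.1 * dPl U (X i) t'.2.2))
      = ((N:ℂ)^2)⁻¹ * (TPDatum.eval (htt t t') U j k) := by
  have e1 : ∀ i, 2 * (dTermM U (X i) t j k * (t'.1 * dPl U (X i) t'.2.2))
      = (2 * t.1 * t'.1 * ((U ^ t.2.1) j k)) * (dPl U (X i) t.2.2 * dPl U (X i) t'.2.2)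
        + (2 * t.1 * t'.1 * Pl U t.2.2) * ((Dpow U (X i) t.2.1 j k) * dPl U (X i) t'.2.2) := by
    intro i
    simp only [dTermM, Matrix.add_apply, Matrix.smul_apply, smul_eq_mul]
    ring
  rw [Finset.sum_congr rfl fun i _ => e1 i, Finset.sum_add_distrib, ← Finset.mul_sum,
    ← Finset.mul_sum, crossA hX hN U t.2.2 t'.2.2, crossB hX hN U t.2.1 t'.2.2 j k,
    htt_eval, mul_add]
  have hA : (2 * t.1 * t'.1 * ((U ^ t.2.1) j k))
      * (-((N:ℂ)^2)⁻¹ * ((dts t.2.2).map fun p => ((dts t'.2.2).map fun p' =>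
          (p.1:ℂ) * p'.1 * Pl U p.2 * Pl U p'.2 * ntr (U ^ (p.1 + p'.1))).sum).sum)
      = ((N:ℂ)^2)⁻¹ * ((dts t.2.2).map fun p => ((dts t'.2.2).map fun p' =>
          ((-2 : ℂ) * t.1 * t'.1 * (p.1 : ℂ) * (p'.1 : ℂ))
            * (ntr (U ^ (p.1 + p'.1)) * Pl U p.2 * Pl U p'.2) * ((U ^ t.2.1) j k)).sum).sum := by
    rw [← mul_assoc,
      mul_lsum2_eq (2 * t.1 * t'.1 * ((U ^ t.2.1) j k) * -((N:ℂ)^2)⁻¹)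
        (dts t.2.2) (fun _ => dts t'.2.2) _
        (fun p p' => ((N:ℂ)^2)⁻¹ * (((-2 : ℂ) * t.1 * t'.1 * (p.1 : ℂ) * (p'.1 : ℂ))
          * (ntr (U ^ (p.1 + p'.1)) * Pl U p.2 * Pl U p'.2) * ((U ^ t.2.1) j k)))
        (fun p _ p' _ => by ring),
      ← mul_lsum2_eq (((N:ℂ)^2)⁻¹) (dts t.2.2) (fun _ => dts t'.2.2) _ _
        (fun p _ p' _ => rfl)]
  have hB : (2 * t.1 * t'.1 * Pl U t.2.2)
      * (-((N:ℂ)^2)⁻¹ * (t.2.1:ℂ) * ((dts t'.2.2).map fun p' =>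
          (p'.1:ℂ) * Pl U p'.2 * ((U ^ (t.2.1 + p'.1)) j k)).sum)
      = ((N:ℂ)^2)⁻¹ * ((dts t'.2.2).map fun p' =>
          ((-2 : ℂ) * t.1 * t'.1 * (t.2.1 : ℂ) * (p'.1 : ℂ))
            * (Pl U t.2.2 * Pl U p'.2) * ((U ^ (t.2.1 + p'.1)) j k)).sum := by
    rw [← mul_assoc, ← mul_assoc,
      mul_lsum_eq_lsum (2 * t.1 * t'.1 * Pl U t.2.2 * -((N:ℂ)^2)⁻¹ * (t.2.1:ℂ))
        (dts t'.2.2) _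
        (fun p' => ((N:ℂ)^2)⁻¹ * (((-2 : ℂ) * t.1 * t'.1 * (t.2.1 : ℂ) * (p'.1 : ℂ))
          * (Pl U t.2.2 * Pl U p'.2) * ((U ^ (t.2.1 + p'.1)) j k)))
        (fun p' _ => by ring),
      ← mul_lsum_eq_lsum (((N:ℂ)^2)⁻¹) (dts t'.2.2) _ _ (fun p' _ => rfl)]
  rw [hA, hB]
  ring

theorem cross_total {X : ι → Matrix (Fin N) (Fin N) ℂ} (hX : IsONB X) (hN : 0 < N)
    (U : Matrix (Fin N) (Fin N) ℂ) (f g : TPDatum) (j k : Fin N) :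
    ∑ i, 2 * (dEval U (X i) f j k * dgval g U (X i))
      = ((N:ℂ)^2)⁻¹ * (TPDatum.eval (hdat f g) U j k) := by
  have e1 : ∀ i, 2 * (dEval U (X i) f j k * dgval g U (X i))
      = (f.map fun t => (g.map fun t' =>
          2 * (dTermM U (X i) t j k * (t'.1 * dPl U (X i) t'.2.2))).sum).sum := by
    intro i
    rw [dEval_apply, dgval, lsum_mul_nested,
      mul_lsum2_eq 2 f (fun _ => g) _ _ (fun t _ t' _ => rfl)]
  rw [Finset.sum_congr rfl fun i _ => e1 i, fsum_lsum]
  have e2 : ∀ t ∈ f, (∑ i, (g.map fun t' =>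
      2 * (dTermM U (X i) t j k * (t'.1 * dPl U (X i) t'.2.2))).sum)
      = (g.map fun t' => ((N:ℂ)^2)⁻¹ * (TPDatum.eval (htt t t') U j k)).sum := by
    intro t _
    rw [fsum_lsum]
    refine congrArg List.sum (List.map_congr_left fun t' _ => ?_)
    exact cross_pair hX hN U t t' j k
  have e3 : TPDatum.eval (hdat f g) U j k
      = (f.map fun t => (g.map fun t' => TPDatum.eval (htt t t') U j k).sum).sum := by
    rw [eval_apply, hdat, lsum_flatMap]
    refine congrArg List.sum (List.map_congr_left fun t _ => ?_)
    rw [lsum_flatMap]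
    refine congrArg List.sum (List.map_congr_left fun t' _ => ?_)
    rw [eval_apply]
  rw [congrArg List.sum (List.map_congr_left e2), e3,
    mul_lsum2_eq ((N:ℂ)^2)⁻¹ f (fun _ => g) _ _ (fun t _ t' _ => rfl)]

end APR

namespace APR
open NormedSpace

theorem gval_repr {N : ℕ} : ∀ {g : TPDatum}, g.IsScalar →
    ∀ W : Matrix (Fin N) (Fin N) ℂ, TPDatum.eval g W = gval g W • (1 : Matrix (Fin N) (Fin N) ℂ)
  | [] => by intro _ W; simp [TPDatum.eval, gval]
  | t :: d => by
    intro hg W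
    have ht : t.2.1 = 0 := hg t List.mem_cons_self
    have hd : TPDatum.IsScalar d := fun t' ht' => hg t' (List.mem_cons_of_mem t ht')
    simp only [TPDatum.eval, List.map_cons, List.sum_cons, gval]
    rw [ht, pow_zero]
    have ihd := gval_repr hd W
    rw [TPDatum.eval] at ihd
    rw [ihd, ← add_smul]
    simp [Pl, gval]

end APR

/-- the asymptotic product rule.  For trace polynomials `f, g` with `g`
scalar, there is a trace polynomial `h` with coefficients independent of `N` such that
`Δ_N(fg) = Δ_N(f) g + f Δ_N(g) + (1/N²) h` for all `N`. -/
theorem asymptotic_product_rule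
    (f g : TPDatum) (hg : g.IsScalar) :
    ∃ h : TPDatum,
      ∀ (N : ℕ), 0 < N → ∀ (ι : Type) [Fintype ι] [DecidableEq ι],
        ∀ (X : ι → Matrix (Fin N) (Fin N) ℂ), IsONB X →
          ∀ U ∈ Matrix.unitaryGroup (Fin N) ℂ,
            mlap X (fun V => f.eval V * g.eval V) U
              = mlap X f.eval U * g.eval U + f.eval U * mlap X g.eval U
                + ((N : ℂ) ^ 2)⁻¹ • h.eval U := by
  classical
  refine ⟨APR.hdat f g, ?_⟩
  intro N hN ι _ _ X hX U _
  have hgrepr := APR.gval_repr (N := N) hg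
  have V0 : ∀ i : ι, U * NormedSpace.exp ((0:ℝ) • X i) = U := by
    intro i
    rw [zero_smul, NormedSpace.exp_zero, mul_one]
  have hΦ : ∀ (i : ι) (s : ℝ),
      HasDerivAt (fun s : ℝ => APR.gval g (U * NormedSpace.exp (s • X i)))
        (APR.dgval g (U * NormedSpace.exp (s • X i)) (X i)) s :=
    fun i s => APR.hasDerivAt_gval (X i) U g s
  have hdΦ : ∀ i : ι, DifferentiableAt ℝ
      (fun s : ℝ => APR.dgval g (U * NormedSpace.exp (s • X i)) (X i)) 0 :=
    fun i => APR.diff_dgval (X i) U g 0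
  ext j k
  have hΨ : ∀ (i : ι) (s : ℝ),
      HasDerivAt (fun s : ℝ => TPDatum.eval f (U * NormedSpace.exp (s • X i)) j k)
        (APR.dEval (U * NormedSpace.exp (s • X i)) (X i) f j k) s :=
    fun i s => APR.hasDerivAt_entry j k (APR.hasDerivAt_eval (X i) U f s)
  have hdΨ : ∀ i : ι, DifferentiableAt ℝ
      (fun s : ℝ => APR.dEval (U * NormedSpace.exp (s • X i)) (X i) f j k) 0 :=
    fun i => APR.diff_dEval_entry (X i) U f j k 0
  have hmf : mlap X (TPDatum.eval f) U j k
      = ∑ i, deriv (fun s : ℝ => APR.dEval (U * NormedSpace.exp (s • X i)) (X i) f j k) 0 := by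
    simp only [mlap, Matrix.of_apply, lap]
    exact Finset.sum_congr rfl fun i _ => APR.iter2_eq (hΨ i) (hdΨ i)
  have hmg : mlap X (TPDatum.eval g) U
      = (∑ i, deriv (fun s : ℝ => APR.dgval g (U * NormedSpace.exp (s • X i)) (X i)) 0)
          • (1 : Matrix (Fin N) (Fin N) ℂ) := by
    ext j' k'
    simp only [mlap, Matrix.of_apply, lap, Matrix.smul_apply, smul_eq_mul]
    have e : ∀ i : ι, iteratedDeriv 2
        (fun s : ℝ => TPDatum.eval g (U * NormedSpace.exp (s • X i)) j' k') 0
        = deriv (fun s : ℝ => APR.dgval g (U * NormedSpace.exp (s • X i)) (X i)) 0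
            * (1 : Matrix (Fin N) (Fin N) ℂ) j' k' := by
      intro i
      have efun : (fun s : ℝ => TPDatum.eval g (U * NormedSpace.exp (s • X i)) j' k')
          = fun s : ℝ => APR.gval g (U * NormedSpace.exp (s • X i))
              * (1 : Matrix (Fin N) (Fin N) ℂ) j' k' := by
        funext s
        rw [hgrepr, Matrix.smul_apply, smul_eq_mul]
      rw [efun, APR.iter2_mul_const _ (hΦ i) (hdΦ i)]
    rw [Finset.sum_congr rfl fun i _ => e i, ← Finset.sum_mul]
  have hlhs : mlap X (fun V => TPDatum.eval f V * TPDatum.eval g V) U j k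
      = ∑ i, (deriv (fun s : ℝ => APR.dgval g (U * NormedSpace.exp (s • X i)) (X i)) 0
            * TPDatum.eval f U j k
          + 2 * (APR.dgval g U (X i) * APR.dEval U (X i) f j k)
          + APR.gval g U
            * deriv (fun s : ℝ => APR.dEval (U * NormedSpace.exp (s • X i)) (X i) f j k) 0) := by
    simp only [mlap, Matrix.of_apply, lap]
    refine Finset.sum_congr rfl fun i _ => ?_
    have efun : (fun s : ℝ => (TPDatum.eval f (U * NormedSpace.exp (s • X i))
          * TPDatum.eval g (U * NormedSpace.exp (s • X i))) j k)
        = fun s : ℝ => APR.gval g (U * NormedSpace.exp (s • X i))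
            * (TPDatum.eval f (U * NormedSpace.exp (s • X i)) j k) := by
      funext s
      rw [hgrepr, Matrix.mul_smul, mul_one, Matrix.smul_apply, smul_eq_mul]
    rw [efun, APR.iter2_mul (hΦ i) (hΨ i) (hdΦ i) (hdΨ i)]
    simp only [V0 i]
  rw [Matrix.add_apply, Matrix.add_apply, Matrix.smul_apply, smul_eq_mul, hlhs, hmg,
    hgrepr U, Matrix.mul_smul, mul_one, Matrix.mul_smul, mul_one, Matrix.smul_apply,
    Matrix.smul_apply, smul_eq_mul, smul_eq_mul, hmf]
  rw [Finset.sum_add_distrib, Finset.sum_add_distrib, ← Finset.sum_mul, ← Finset.mul_sum,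
    ← Finset.mul_sum]
  have hcross : (2:ℂ) * ∑ i, (APR.dgval g U (X i) * APR.dEval U (X i) f j k)
      = ((N:ℂ)^2)⁻¹ * (TPDatum.eval (APR.hdat f g) U j k) := by
    rw [Finset.mul_sum, ← APR.cross_total hX hN U f g j k]
    exact Finset.sum_congr rfl fun i _ => by ring
  rw [hcross]
  ring
end
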